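/- Fix p ∈ (0,1) with p ≠ 1/2, and let α = 1/(p^p (1−p)^{1−p}). Consider the Markov chain (X_t) on {0,1}^n in which X_{t+1} is obtained from X_t by flipping each bit independently with probability p (every offspring is accepted and no state is absorbing). Let T_S be the first time t ≥ 1 with X_t ∈ ⋃_{k=1}^N S_k, the union of the stepping stones of DistantSteppingStones_p. Then there is a constant C such that for all n and every starting state X_0 = x ∈ {0,1}^n, E[T_S] ≤ C · α^n. -/

import Mathlib

open Finset
open scoped Classical

namespace DSS

/-- Number of ones of a bit string. -/
def ones {n : ℕ} (x : Fin n → Bool) : ℕ := (Finset.univ.filter fun i => x i = true).card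

/-- Hamming distance between two bit strings. -/
def hamming {n : ℕ} (x y : Fin n → Bool) : ℕ := (Finset.univ.filter fun i => x i ≠ y i).card

/-- The all-ones string. -/
def allOnes (n : ℕ) : Fin n → Bool := fun _ => true

/-- Probability that mutating `x` (flipping each bit independently with probability `q`)
produces exactly `y`. -/
noncomputable def flipProb {n : ℕ} (q : ℝ) (x y : Fin n → Bool) : ℝ :=
  q ^ hamming x y * (1 - q) ^ (n - hamming x y)

/-- Probability that the offspring of `x` under mutation rate `q` lies in the set `E`. -/
noncomputable def mutProb {n : ℕ} (q : ℝ) (x : Fin n → Bool) (E : Set (Fin n → Bool)) : ℝ :=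
  ∑ y : Fin n → Bool, if y ∈ E then flipProb q x y else 0

/-- One-step transition probability of the (1+1) EA on fitness `f` with mutation rate `q`. -/
noncomputable def eaStep {n : ℕ} (f : (Fin n → Bool) → ℝ) (q : ℝ) (x y : Fin n → Bool) : ℝ :=
  (if f x ≤ f y then flipProb q x y else 0) +
    (if y = x then ∑ z : Fin n → Bool, if f z < f x then flipProb q x z else 0 else 0)

/-- Sub-probability mass of the (1+1) EA chain killed upon entering `A`, starting from the
initial mass function `μ0`: `eaKilled f q A μ0 t y` is the probability that the chain has
avoided `A` at all times `0,…,t` and is at `y` at time `t`. -/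
noncomputable def eaKilled {n : ℕ} (f : (Fin n → Bool) → ℝ) (q : ℝ)
    (A : Set (Fin n → Bool)) (μ0 : (Fin n → Bool) → ℝ) : ℕ → (Fin n → Bool) → ℝ
  | 0, y => if y ∈ A then 0 else μ0 y
  | t + 1, y => if y ∈ A then 0
      else ∑ x : Fin n → Bool, eaKilled f q A μ0 t x * eaStep f q x y

/-- The uniform distribution on bit strings. -/
noncomputable def uniform (n : ℕ) : (Fin n → Bool) → ℝ := fun _ => (1 : ℝ) / 2 ^ n

/-- Expected hitting time of the set `A` for the (1+1) EA on `f` with mutation rate `q` and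
initial distribution `μ0`, via `E[T] = ∑_{t ≥ 0} P(T > t)`. -/
noncomputable def eaHitTime {n : ℕ} (f : (Fin n → Bool) → ℝ) (q : ℝ)
    (A : Set (Fin n → Bool)) (μ0 : (Fin n → Bool) → ℝ) : ℝ :=
  ∑' t : ℕ, ∑ y : Fin n → Bool, eaKilled f q A μ0 t y

/-- The set of global maxima of a fitness function. -/
def maxSet {n : ℕ} (f : (Fin n → Bool) → ℝ) : Set (Fin n → Bool) := {x | ∀ y, f y ≤ f x}

/-- Expected runtime `E[T(q)]` of the (1+1) EA on `f` with mutation rate `q`: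
the expectation of the least `t ≥ 0` such that `X_t` is a global maximum of `f`,
started from the uniform distribution. -/
noncomputable def expectedRuntime {n : ℕ} (f : (Fin n → Bool) → ℝ) (q : ℝ) : ℝ :=
  eaHitTime f q (maxSet f) (uniform n)

/-- The map `f_p(x) = p(1-x) + (1-p)x`. -/
noncomputable def fp (p : ℝ) (x : ℝ) : ℝ := p * (1 - x) + (1 - p) * x

/-- `s p k = f_p^{(k)}(1)`. -/
noncomputable def s (p : ℝ) (k : ℕ) : ℝ := (fp p)^[k] 1

/-- `N(n)`: the least `k ≥ 1` with `⌊n s_k⌋ = ⌊n/2⌋`. -/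
noncomputable def NN (p : ℝ) (n : ℕ) : ℕ :=
  sInf {k : ℕ | 1 ≤ k ∧ ⌊(n : ℝ) * s p k⌋ = ⌊(n : ℝ) / 2⌋}

/-- `x ∈ S_k`, i.e. the number of ones of `x` is `⌊n s_k⌋`. -/
def inStone (p : ℝ) {n : ℕ} (k : ℕ) (x : Fin n → Bool) : Prop :=
  (ones x : ℤ) = ⌊(n : ℝ) * s p k⌋

/-- The fitness function `DistantSteppingStones_p`: value `N + 1 - k` on `S_k`
(for the least such `k ≤ N`), and `0` elsewhere. -/
noncomputable def dss (p : ℝ) (n : ℕ) (x : Fin n → Bool) : ℝ :=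
  if ∃ k ≤ NN p n, inStone p k x
  then ((NN p n + 1 - sInf {k : ℕ | k ≤ NN p n ∧ inStone p k x} : ℕ) : ℝ)
  else 0

/-- The union of the stepping stones `S_1, …, S_N`. -/
def stones (p : ℝ) (n : ℕ) : Set (Fin n → Bool) :=
  {x | ∃ k, 1 ≤ k ∧ k ≤ NN p n ∧ inStone p k x}

/-- Sub-probability mass of the pure mutation chain (every offspring accepted) killed upon
entering `A` at times `t ≥ 1`, started at `x0`. -/
noncomputable def pureKilled {n : ℕ} (q : ℝ) (A : Set (Fin n → Bool)) (x0 : Fin n → Bool) :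
    ℕ → (Fin n → Bool) → ℝ
  | 0, y => if y = x0 then 1 else 0
  | t + 1, y => if y ∈ A then 0
      else ∑ x : Fin n → Bool, pureKilled q A x0 t x * flipProb q x y

/-- Expected value of the first time `t ≥ 1` at which the pure mutation chain started at
`x0` lies in `A`, via `E[T] = ∑_{t ≥ 0} P(T > t)`. -/
noncomputable def pureHitTime {n : ℕ} (q : ℝ) (A : Set (Fin n → Bool)) (x0 : Fin n → Bool) : ℝ :=
  ∑' t : ℕ, ∑ y : Fin n → Bool, pureKilled q A x0 t y

/-- Probability that the (1+1) EA on `f` with mutation rate `q`, started uniformly at random,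
visits the set `B` strictly before the set `A`. -/
noncomputable def reachBeforeProb {n : ℕ} (f : (Fin n → Bool) → ℝ) (q : ℝ)
    (A B : Set (Fin n → Bool)) : ℝ :=
  (∑ y : Fin n → Bool, if y ∈ B then uniform n y else 0) +
    ∑' t : ℕ, ∑ x : Fin n → Bool, eaKilled f q (A ∪ B) (uniform n) t x *
      ∑ y : Fin n → Bool, if y ∈ B then eaStep f q x y else 0

/-- Probability that, within the next `M` iterations of the (1+1) EA on `f` with mutation
rate `q` started at the current individual `x`, some produced offspring (accepted or not)
lies in `G`. -/
noncomputable def offspringReach {n : ℕ} (f : (Fin n → Bool) → ℝ) (q : ℝ)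
    (G : Set (Fin n → Bool)) : ℕ → (Fin n → Bool) → ℝ
  | 0, _ => 0
  | M + 1, x => ∑ y : Fin n → Bool,
      flipProb q x y *
        (if y ∈ G then 1 else offspringReach f q G M (if f x ≤ f y then y else x))



/-! ### Auxiliary development -/

section Basic

variable {n : ℕ}

lemma ones_le (x : Fin n → Bool) : ones x ≤ n := by
  classical
  have := Finset.card_filter_le (Finset.univ : Finset (Fin n)) (fun i => x i = true)
  simpa [ones] using this

/-- The set of flipped coordinates. -/
def diffSet (x y : Fin n → Bool) : Finset (Fin n) := Finset.univ.filter fun i => x i ≠ y i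

lemma hamming_eq_card (x y : Fin n → Bool) : hamming x y = (diffSet x y).card := rfl

/-- Flip the bits of `x` in the set `D`. -/
def flipSet (x : Fin n → Bool) (D : Finset (Fin n)) : Fin n → Bool :=
  fun i => if i ∈ D then !(x i) else x i

lemma diffSet_flipSet (x : Fin n → Bool) (D : Finset (Fin n)) :
    diffSet x (flipSet x D) = D := by
  ext i
  by_cases h : i ∈ D <;> simp [diffSet, flipSet, h]

lemma flipSet_diffSet (x y : Fin n → Bool) : flipSet x (diffSet x y) = y := by
  funext i
  by_cases h : x i = y i <;> cases hx : x i <;> cases hy : y i <;>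
    simp_all [diffSet, flipSet]

lemma flipSet_bijective (x : Fin n → Bool) : Function.Bijective (flipSet x) := by
  refine Function.bijective_iff_has_inverse.2 ⟨diffSet x, ?_, ?_⟩
  · intro D; exact diffSet_flipSet x D
  · intro y; exact flipSet_diffSet x y

lemma hamming_flipSet (x : Fin n → Bool) (D : Finset (Fin n)) :
    hamming x (flipSet x D) = D.card := by
  rw [hamming_eq_card, diffSet_flipSet]

lemma hamming_le_n (x y : Fin n → Bool) : hamming x y ≤ n := by
  have := Finset.card_filter_le (Finset.univ : Finset (Fin n)) (fun i => x i ≠ y i)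
  simpa [hamming] using this

lemma flipProb_nonneg {q : ℝ} (h0 : 0 ≤ q) (h1 : q ≤ 1) (x y : Fin n → Bool) :
    0 ≤ flipProb q x y :=
  mul_nonneg (pow_nonneg h0 _) (pow_nonneg (by linarith) _)

lemma flipProb_sum (q : ℝ) (x : Fin n → Bool) :
    ∑ y : Fin n → Bool, flipProb q x y = 1 := by
  classical
  have hb : ∑ y : Fin n → Bool, flipProb q x y
      = ∑ D : Finset (Fin n), q ^ D.card * (1 - q) ^ (n - D.card) := by
    refine (Fintype.sum_bijective (flipSet x) (flipSet_bijective x)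
      (fun D => q ^ D.card * (1 - q) ^ (n - D.card)) (flipProb q x) ?_).symm
    intro D
    rw [flipProb, hamming_flipSet]
  rw [hb]
  have h2 := Finset.prod_add (fun _ : Fin n => q) (fun _ : Fin n => (1 - q)) Finset.univ
  simp only [Finset.prod_const] at h2
  have h4 : ((q : ℝ) + (1 - q)) ^ (Finset.univ : Finset (Fin n)).card = 1 := by norm_num
  rw [h4] at h2
  rw [← Finset.powerset_univ]
  have h5 : ∑ D ∈ (Finset.univ : Finset (Fin n)).powerset, q ^ D.card * (1 - q) ^ (n - D.card)
      = ∑ D ∈ (Finset.univ : Finset (Fin n)).powerset, q ^ D.card * (1 - q) ^ (Finset.univ \ D).card := by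
    refine Finset.sum_congr rfl (fun t _ => ?_)
    rw [← Finset.compl_eq_univ_sdiff, Finset.card_compl, Fintype.card_fin]
  rw [h5, ← h2]

end Basic

section Chain

variable {n : ℕ} {q : ℝ} {A : Set (Fin n → Bool)}

lemma pureKilled_zero (x0 y : Fin n → Bool) :
    pureKilled q A x0 0 y = if y = x0 then 1 else 0 := by simp [pureKilled]

lemma pureKilled_succ (x0 y : Fin n → Bool) (t : ℕ) :
    pureKilled q A x0 (t+1) y = if y ∈ A then 0
      else ∑ x : Fin n → Bool, pureKilled q A x0 t x * flipProb q x y := by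
  simp [pureKilled]

lemma pureKilled_nonneg (h0 : 0 ≤ q) (h1 : q ≤ 1) (x0 : Fin n → Bool) (t : ℕ)
    (y : Fin n → Bool) : 0 ≤ pureKilled q A x0 t y := by
  induction t generalizing y with
  | zero => rw [pureKilled_zero]; positivity
  | succ t ih =>
    rw [pureKilled_succ]
    split
    · exact le_refl 0
    · exact Finset.sum_nonneg fun x _ => mul_nonneg (ih x) (flipProb_nonneg h0 h1 x y)

/-- Chapman–Kolmogorov for the killed chain. -/
lemma pureKilled_add (x0 : Fin n → Bool) (s t : ℕ) (y : Fin n → Bool) :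
    pureKilled q A x0 (s + t) y
      = ∑ z : Fin n → Bool, pureKilled q A x0 s z * pureKilled q A z t y := by
  induction t generalizing y with
  | zero =>
    simp only [Nat.add_zero, pureKilled_zero]
    rw [Finset.sum_congr rfl (fun z _ => by rw [mul_ite, mul_one, mul_zero])]
    rw [Finset.sum_ite_eq Finset.univ y (fun z => pureKilled q A x0 s z)]
    simp
  | succ t ih =>
    have : s + (t+1) = (s+t) + 1 := rfl
    rw [this, pureKilled_succ]
    by_cases hy : y ∈ A
    · simp only [hy, if_true]
      rw [Finset.sum_congr rfl (fun z _ => by rw [pureKilled_succ, if_pos hy, mul_zero])]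
      simp
    · simp only [hy, if_false]
      rw [Finset.sum_congr rfl (fun x _ => by rw [ih x, Finset.sum_mul])]
      rw [Finset.sum_comm]
      refine Finset.sum_congr rfl (fun z _ => ?_)
      rw [pureKilled_succ, if_neg hy, Finset.mul_sum]
      exact Finset.sum_congr rfl (fun x _ => by ring)

/-- Total killed mass. -/
noncomputable def mass (q : ℝ) (A : Set (Fin n → Bool)) (z : Fin n → Bool) (t : ℕ) : ℝ :=
  ∑ y : Fin n → Bool, pureKilled q A z t y

lemma mass_zero (z : Fin n → Bool) : mass q A z 0 = 1 := by
  simp [mass, pureKilled_zero]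

lemma mass_nonneg (h0 : 0 ≤ q) (h1 : q ≤ 1) (z : Fin n → Bool) (t : ℕ) :
    0 ≤ mass q A z t :=
  Finset.sum_nonneg fun y _ => pureKilled_nonneg h0 h1 z t y

lemma mass_add (x0 : Fin n → Bool) (s t : ℕ) :
    mass q A x0 (s + t) = ∑ z : Fin n → Bool, pureKilled q A x0 s z * mass q A z t := by
  unfold mass
  rw [Finset.sum_congr rfl (fun y _ => pureKilled_add x0 s t y), Finset.sum_comm]
  exact Finset.sum_congr rfl (fun z _ => by rw [Finset.mul_sum])

lemma pureKilled_one (z w : Fin n → Bool) :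
    pureKilled q A z 1 w = if w ∈ A then 0 else flipProb q z w := by
  rw [pureKilled_succ]
  split
  · rfl
  · rw [Finset.sum_congr rfl (fun x _ => by rw [pureKilled_zero, ite_mul, one_mul, zero_mul])]
    rw [Finset.sum_ite_eq' Finset.univ z (fun x => flipProb q x w)]
    simp

lemma mass_succ (z : Fin n → Bool) (t : ℕ) :
    mass q A z (1 + t) = ∑ w : Fin n → Bool,
      (if w ∈ A then 0 else flipProb q z w * mass q A w t) := by
  rw [mass_add z 1 t]
  refine Finset.sum_congr rfl (fun w _ => ?_)
  rw [pureKilled_one]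
  split <;> simp

lemma mass_le_one (h0 : 0 ≤ q) (h1 : q ≤ 1) (z : Fin n → Bool) (t : ℕ) :
    mass q A z t ≤ 1 := by
  induction t generalizing z with
  | zero => rw [mass_zero]
  | succ t ih =>
    have : t + 1 = 1 + t := by omega
    rw [this, mass_succ]
    calc ∑ w : Fin n → Bool, (if w ∈ A then 0 else flipProb q z w * mass q A w t)
        ≤ ∑ w : Fin n → Bool, flipProb q z w := by
          refine Finset.sum_le_sum (fun w _ => ?_)
          split
          · exact flipProb_nonneg h0 h1 z w
          · calc flipProb q z w * mass q A w t ≤ flipProb q z w * 1 :=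
                mul_le_mul_of_nonneg_left (ih w) (flipProb_nonneg h0 h1 z w)
            _ = flipProb q z w := mul_one _
      _ = 1 := flipProb_sum q z

lemma mass_decay (h0 : 0 ≤ q) (h1 : q ≤ 1) {K : ℕ} {δ : ℝ}
    (h : ∀ z : Fin n → Bool, mass q A z K ≤ 1 - δ) (x0 : Fin n → Bool) (s : ℕ) :
    mass q A x0 (s + K) ≤ (1 - δ) * mass q A x0 s := by
  rw [mass_add x0 s K, mass]
  rw [Finset.mul_sum]
  refine Finset.sum_le_sum (fun z _ => ?_)
  calc pureKilled q A x0 s z * mass q A z K ≤ pureKilled q A x0 s z * (1 - δ) :=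
        mul_le_mul_of_nonneg_left (h z) (pureKilled_nonneg h0 h1 x0 s z)
    _ = (1 - δ) * pureKilled q A x0 s z := mul_comm _ _

lemma mass_le_pow (h0 : 0 ≤ q) (h1 : q ≤ 1) {K : ℕ} {δ : ℝ} (hK : 0 < K)
    (hδ0 : 0 ≤ δ) (hδ1 : δ ≤ 1)
    (h : ∀ z : Fin n → Bool, mass q A z K ≤ 1 - δ) (x0 : Fin n → Bool) (t : ℕ) :
    mass q A x0 t ≤ (1 - δ) ^ (t / K) := by
  induction t using Nat.strong_induction_on with
  | _ t ih =>
    by_cases ht : t < K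
    · rw [Nat.div_eq_of_lt ht, pow_zero]
      exact mass_le_one h0 h1 x0 t
    · push_neg at ht
      have h3 : t / K = (t - K) / K + 1 := Nat.div_eq_sub_div hK ht
      have h2 : mass q A x0 t = mass q A x0 ((t - K) + K) := by
        rw [Nat.sub_add_cancel ht]
      rw [h3, h2]
      calc mass q A x0 ((t - K) + K) ≤ (1 - δ) * mass q A x0 (t - K) :=
            mass_decay h0 h1 h x0 (t - K)
        _ ≤ (1 - δ) * (1 - δ) ^ ((t - K) / K) := by
            refine mul_le_mul_of_nonneg_left ?_ (by linarith)
            exact ih (t - K) (by omega)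
        _ = (1 - δ) ^ ((t - K) / K + 1) := by ring

lemma geom_partial_le {x : ℝ} (hx0 : 0 ≤ x) (hx1 : x < 1) (J : ℕ) :
    ∑ j ∈ Finset.range J, x ^ j ≤ 1 / (1 - x) := by
  have hne : x ≠ 1 := by intro he; rw [he] at hx1; linarith
  rw [geom_sum_eq hne J]
  have h1 : 0 < 1 - x := by linarith
  have h2 : (x ^ J - 1) / (x - 1) = (1 - x ^ J) / (1 - x) := by
    rw [div_eq_div_iff (by linarith) (by linarith)]
    ring
  rw [h2]
  have h3 : x ^ J ≥ 0 := pow_nonneg hx0 J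
  rw [div_le_div_iff₀ h1 h1]
  nlinarith

lemma sum_pow_div_le {x : ℝ} (hx0 : 0 ≤ x) (hx1 : x < 1) (K : ℕ) (hK : 0 < K) (T : ℕ) :
    ∑ t ∈ Finset.range T, x ^ (t / K) ≤ K / (1 - x) := by
  have key : ∀ J : ℕ, ∑ t ∈ Finset.range (K * J), x ^ (t / K)
      = K * ∑ j ∈ Finset.range J, x ^ j := by
    intro J
    induction J with
    | zero => simp
    | succ J ihJ =>
      have : K * (J + 1) = K * J + K := by ring
      rw [this, Finset.sum_range_add, ihJ, Finset.sum_range_succ]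
      have h2 : ∀ i ∈ Finset.range K, x ^ ((K * J + i) / K) = x ^ J := by
        intro i hi
        rw [Finset.mem_range] at hi
        congr 1
        rw [Nat.mul_add_div hK]
        simp [Nat.div_eq_of_lt hi]
      rw [Finset.sum_congr rfl h2, Finset.sum_const, Finset.card_range]
      push_cast
      ring
  calc ∑ t ∈ Finset.range T, x ^ (t / K)
      ≤ ∑ t ∈ Finset.range (K * T), x ^ (t / K) := by
        refine Finset.sum_le_sum_of_subset_of_nonneg ?_ (fun i _ _ => pow_nonneg hx0 _)
        exact Finset.range_subset_range.2 (Nat.le_mul_of_pos_left T hK)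
    _ = K * ∑ j ∈ Finset.range T, x ^ j := key T
    _ ≤ K * (1 / (1 - x)) := by
        refine mul_le_mul_of_nonneg_left (geom_partial_le hx0 hx1 T) (by positivity)
    _ = K / (1 - x) := by ring

/-- Main hitting-time bound from a uniform `K`-step kill probability. -/
lemma pureHitTime_le (h0 : 0 ≤ q) (h1 : q ≤ 1) {K : ℕ} {δ : ℝ} (hK : 0 < K)
    (hδ0 : 0 < δ) (hδ1 : δ ≤ 1)
    (h : ∀ z : Fin n → Bool, mass q A z K ≤ 1 - δ) (x0 : Fin n → Bool) :
    pureHitTime q A x0 ≤ K / δ := by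
  have hb : ∀ T : ℕ, ∑ t ∈ Finset.range T, mass q A x0 t ≤ K / δ := by
    intro T
    calc ∑ t ∈ Finset.range T, mass q A x0 t
        ≤ ∑ t ∈ Finset.range T, (1 - δ) ^ (t / K) :=
          Finset.sum_le_sum (fun t _ => mass_le_pow h0 h1 hK hδ0.le hδ1 h x0 t)
      _ ≤ K / (1 - (1 - δ)) := sum_pow_div_le (by linarith) (by linarith) K hK T
      _ = K / δ := by ring_nf
  have hht : pureHitTime q A x0 = ∑' t : ℕ, mass q A x0 t := rfl
  rw [hht]
  by_cases hs : Summable (fun t => mass q A x0 t)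
  · exact Summable.tsum_le_of_sum_range_le hs hb
  · rw [tsum_eq_zero_of_not_summable hs]
    calc (0:ℝ) ≤ ∑ t ∈ Finset.range 0, mass q A x0 t := by simp
      _ ≤ K / δ := hb 0

end Chain

section Term

/-- Binomial probability term. -/
noncomputable def term (p : ℝ) (m k : ℕ) : ℝ :=
  (m.choose k : ℝ) * p ^ k * (1 - p) ^ (m - k)

variable {p : ℝ}

lemma term_nonneg (hp0 : 0 < p) (hp1 : p < 1) (m k : ℕ) : 0 ≤ term p m k := by
  unfold term
  have : (0:ℝ) ≤ 1 - p := by linarith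
  positivity

lemma term_sum (m : ℕ) : ∑ k ∈ Finset.range (m+1), term p m k = 1 := by
  have h := add_pow p (1-p) m
  have h1 : (p + (1 - p)) = 1 := by ring
  rw [h1, one_pow] at h
  have h2 : ∑ k ∈ Finset.range (m+1), term p m k
      = ∑ k ∈ Finset.range (m+1), p ^ k * (1-p) ^ (m - k) * (m.choose k : ℝ) :=
    Finset.sum_congr rfl (fun k _ => by unfold term; ring)
  rw [h2]
  exact h.symm

lemma term_ratio (m k : ℕ) (hk : k < m) :
    term p m (k+1) * ((1-p) * (k+1)) = term p m k * (p * ((m:ℝ) - k)) := by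
  unfold term
  have hc : ((m.choose (k+1) : ℝ) * ((k:ℝ)+1)) = (m.choose k : ℝ) * ((m:ℝ) - (k:ℝ)) := by
    have := Nat.choose_succ_right_eq m k
    have h2 : ((m.choose (k+1) * (k+1) : ℕ) : ℝ) = ((m.choose k * (m - k) : ℕ) : ℝ) := by
      exact_mod_cast congrArg Nat.cast this
    push_cast [Nat.cast_sub hk.le] at h2
    linarith [h2]
  have hpow : (1 - p) ^ (m - (k+1)) * (1 - p) = (1 - p) ^ (m - k) := by
    rw [← pow_succ]
    congr 1
    omega
  calc (m.choose (k+1) : ℝ) * p ^ (k+1) * (1 - p) ^ (m - (k+1)) * ((1-p) * ((k:ℝ)+1))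
      = ((m.choose (k+1) : ℝ) * ((k:ℝ)+1)) * p ^ (k+1) * ((1 - p) ^ (m - (k+1)) * (1-p)) := by
        push_cast
        ring
    _ = ((m.choose k : ℝ) * ((m:ℝ) - (k:ℝ))) * p ^ (k+1) * (1 - p) ^ (m - k) := by
        rw [hc, hpow]
    _ = (m.choose k : ℝ) * p ^ k * (1 - p) ^ (m - k) * (p * ((m:ℝ) - k)) := by
        rw [pow_succ]
        ring

/-- The mode of the binomial distribution. -/
noncomputable def md (p : ℝ) (m : ℕ) : ℕ := ⌊((m:ℝ) + 1) * p⌋₊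

lemma md_le (hp0 : 0 < p) (hp1 : p < 1) (m : ℕ) : md p m ≤ m := by
  have hm : (0:ℝ) ≤ (m:ℝ) := Nat.cast_nonneg m
  have h : (((m:ℝ) + 1) * p) < ((m:ℝ) + 1) := by nlinarith
  have h2 : md p m < m + 1 := by
    apply (Nat.floor_lt (by positivity)).2
    push_cast
    linarith
  omega

lemma md_le_real (hp0 : 0 < p) (m : ℕ) : (md p m : ℝ) ≤ ((m:ℝ) + 1) * p :=
  Nat.floor_le (by positivity)

lemma md_lt_real (m : ℕ) : ((m:ℝ) + 1) * p < (md p m : ℝ) + 1 :=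
  Nat.lt_floor_add_one _

lemma term_mono_up (hp0 : 0 < p) (hp1 : p < 1) (m k : ℕ) (hk : k < md p m) :
    term p m k ≤ term p m (k+1) := by
  have hkm : k < m := lt_of_lt_of_le hk (md_le hp0 hp1 m)
  have hid := term_ratio (p := p) m k hkm
  have hk1 : (k:ℝ) + 1 ≤ ((m:ℝ) + 1) * p := by
    have h1 : (k:ℝ) + 1 ≤ (md p m : ℝ) := by exact_mod_cast hk
    exact h1.trans (md_le_real hp0 m)
  have hcmp : (1-p) * ((k:ℝ)+1) ≤ p * ((m:ℝ) - k) := by nlinarith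
  have hpos : (0:ℝ) < (1-p) * ((k:ℝ)+1) := by
    have : (0:ℝ) < 1 - p := by linarith
    positivity
  have ht : 0 ≤ term p m k := term_nonneg hp0 hp1 m k
  have h2 : term p m k * ((1-p) * ((k:ℝ)+1)) ≤ term p m (k+1) * ((1-p) * ((k:ℝ)+1)) := by
    rw [hid]
    exact mul_le_mul_of_nonneg_left hcmp ht
  exact le_of_mul_le_mul_right h2 hpos

lemma term_mono_down (hp0 : 0 < p) (hp1 : p < 1) (m k : ℕ) (hk : md p m ≤ k) (hkm : k < m) :
    term p m (k+1) ≤ term p m k := by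
  have hid := term_ratio (p := p) m k hkm
  have hk1 : ((m:ℝ) + 1) * p ≤ (k:ℝ) + 1 := by
    have h1 : (md p m : ℝ) ≤ (k:ℝ) := by exact_mod_cast hk
    have := md_lt_real (p := p) m
    linarith
  have hcmp : p * ((m:ℝ) - k) ≤ (1-p) * ((k:ℝ)+1) := by nlinarith
  have hpos : (0:ℝ) < (1-p) * ((k:ℝ)+1) := by
    have : (0:ℝ) < 1 - p := by linarith
    positivity
  have ht : 0 ≤ term p m k := term_nonneg hp0 hp1 m k
  have h2 : term p m (k+1) * ((1-p) * ((k:ℝ)+1)) ≤ term p m k * ((1-p) * ((k:ℝ)+1)) := by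
    rw [hid]
    exact mul_le_mul_of_nonneg_left hcmp ht
  exact le_of_mul_le_mul_right h2 hpos

lemma term_le_md (hp0 : 0 < p) (hp1 : p < 1) (m k : ℕ) (hkm : k ≤ m) :
    term p m k ≤ term p m (md p m) := by
  rcases le_or_gt k (md p m) with h | h
  · -- climb up from k to md
    have key : ∀ j : ℕ, term p m (md p m - j) ≤ term p m (md p m) := by
      intro j
      induction j with
      | zero => simp
      | succ j ih =>
        rcases le_or_gt (md p m) j with hj | hj
        · have : md p m - (j+1) = md p m - j := by omega
          rw [this]; exact ih
        · have h1 : md p m - (j+1) < md p m := by omega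
          have h2 : (md p m - (j+1)) + 1 = md p m - j := by omega
          have := term_mono_up hp0 hp1 m (md p m - (j+1)) h1
          rw [h2] at this
          exact this.trans ih
    have hk : k = md p m - (md p m - k) := by omega
    rw [hk]
    exact key _
  · -- descend from md to k
    have key : ∀ j : ℕ, md p m + j ≤ m → term p m (md p m + j) ≤ term p m (md p m) := by
      intro j
      induction j with
      | zero => simp
      | succ j ih =>
        intro hj
        have h1 : md p m + j < m := by omega
        have := term_mono_down hp0 hp1 m (md p m + j) (by omega) h1
        have h2 : md p m + j + 1 = md p m + (j+1) := by omega
        rw [h2] at this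
        exact this.trans (ih (by omega))
    have hk : k = md p m + (k - md p m) := by omega
    rw [hk]
    exact key _ (by omega)

lemma term_md_ge (hp0 : 0 < p) (hp1 : p < 1) (m : ℕ) :
    1 ≤ ((m:ℝ) + 1) * term p m (md p m) := by
  have h := term_sum (p := p) m
  have h2 := Finset.sum_le_card_nsmul (Finset.range (m+1)) (fun k => term p m k)
    (term p m (md p m))
    (fun k hk => term_le_md hp0 hp1 m k (Nat.lt_succ_iff.1 (Finset.mem_range.1 hk)))
  rw [Finset.card_range, h, nsmul_eq_mul] at h2
  push_cast at h2
  linarith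

lemma term_shift_down (hp0 : 0 < p) (hp1 : p < 1) (m : ℕ) :
    ∀ s : ℕ, 3 * (s:ℝ) ≤ p * (1-p) * ((m:ℝ)+1) →
      (1/2:ℝ)^s * term p m (md p m) ≤ term p m (md p m - s) := by
  intro s
  induction s with
  | zero => intro _; simp
  | succ s ih =>
    intro hA
    have ihs := ih (by push_cast at hA ⊢; linarith)
    have hT : 0 ≤ term p m (md p m) := term_nonneg hp0 hp1 m _
    rcases le_or_gt (md p m) s with hu | hu
    · have heq : md p m - (s+1) = md p m - s := by omega
      rw [heq]
      calc (1/2:ℝ)^(s+1) * term p m (md p m) ≤ (1/2:ℝ)^s * term p m (md p m) := by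
            have : ((1:ℝ)/2)^(s+1) ≤ (1/2:ℝ)^s := by
              apply pow_le_pow_of_le_one <;> norm_num
            exact mul_le_mul_of_nonneg_right this hT
        _ ≤ term p m (md p m - s) := ihs
    · set k := md p m - s with hkdef
      have hk1 : 1 ≤ k := by omega
      have hkm : k ≤ md p m := by omega
      have hkmm : k - 1 < m := by have := md_le hp0 hp1 m; omega
      have heq : md p m - (s+1) = k - 1 := by omega
      rw [heq]
      have hid := term_ratio (p := p) m (k-1) hkmm
      have hk1' : (k-1) + 1 = k := by omega
      rw [hk1'] at hid
      -- real facts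
      have hkr : (k:ℝ) = (md p m : ℝ) - s := by
        have : (k:ℕ) + s = md p m := by omega
        push_cast [← this]
        ring
      have hmd1 := md_lt_real (p := p) m
      have hmd2 := md_le_real (p := p) hp0 m
      have hkm_r : (k:ℝ) ≤ (m:ℝ) := by exact_mod_cast (by omega : k ≤ m)
      have hc1 : (((k:ℕ) - 1 : ℕ):ℝ) = (k:ℝ) - 1 := by
        push_cast [Nat.cast_sub hk1]
        ring
      rw [hc1] at hid
      have hid' : term p m k * ((1-p) * (k:ℝ))
          = term p m (k-1) * (p * ((m:ℝ) - k + 1)) := by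
        calc term p m k * ((1-p) * (k:ℝ)) = term p m k * ((1 - p) * ((k:ℝ) - 1 + 1)) := by ring
          _ = term p m (k-1) * (p * ((m:ℝ) - ((k:ℝ) - 1))) := hid
          _ = term p m (k-1) * (p * ((m:ℝ) - k + 1)) := by ring
      have hA' : 3*((s:ℝ)+1) ≤ p*(1-p)*((m:ℝ)+1) := by push_cast at hA; linarith
      have e1 : ((m:ℝ)+1)*p - 1 - s ≤ (k:ℝ) := by
        rw [hkr]; linarith
      have hcond : p * ((m:ℝ) - k + 1) ≤ 2 * ((1-p) * k) := by
        nlinarith [mul_le_mul_of_nonneg_left e1 hp0.le,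
          mul_le_mul_of_nonneg_left e1 (by linarith : (0:ℝ) ≤ 2*(1-p)),
          mul_nonneg hp0.le (by positivity : (0:ℝ) ≤ (s:ℝ)+1),
          mul_nonneg (by linarith : (0:ℝ) ≤ 1-p) (by positivity : (0:ℝ) ≤ (s:ℝ)+1)]
      have hpos : (0:ℝ) < p * ((m:ℝ) - k + 1) := by
        have : (k:ℝ) ≤ (m:ℝ) := hkm_r
        nlinarith
      have hterm : 0 ≤ term p m k := term_nonneg hp0 hp1 m k
      have key : (1/2:ℝ) * term p m k ≤ term p m (k-1) := by
        have h3 : (1/2:ℝ) * term p m k * (p * ((m:ℝ) - k + 1))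
            ≤ term p m (k-1) * (p * ((m:ℝ) - k + 1)) := by
          nlinarith [mul_le_mul_of_nonneg_left hcond hterm]
        exact le_of_mul_le_mul_right h3 hpos
      calc (1/2:ℝ)^(s+1) * term p m (md p m)
          = (1/2:ℝ) * ((1/2:ℝ)^s * term p m (md p m)) := by ring
        _ ≤ (1/2:ℝ) * term p m k := by
            refine mul_le_mul_of_nonneg_left ?_ (by norm_num)
            exact ihs
        _ ≤ term p m (k-1) := key

lemma term_shift_up (hp0 : 0 < p) (hp1 : p < 1) (m : ℕ) :
    ∀ s : ℕ, md p m + s ≤ m → 3 * (s:ℝ) ≤ p * (1-p) * ((m:ℝ)+1) →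
      (1/2:ℝ)^s * term p m (md p m) ≤ term p m (md p m + s) := by
  intro s
  induction s with
  | zero => intro _ _; simp
  | succ s ih =>
    intro hsm hA
    have ihs := ih (by omega) (by push_cast at hA ⊢; linarith)
    have hT : 0 ≤ term p m (md p m) := term_nonneg hp0 hp1 m _
    set k := md p m + s with hkdef
    have hkm : k < m := by omega
    have hid := term_ratio (p := p) m k hkm
    have hmd1 := md_lt_real (p := p) m
    have hmd2 := md_le_real (p := p) hp0 m
    have hkr : (k:ℝ) = (md p m : ℝ) + s := by push_cast [hkdef]; ring
    have hkm_r : (k:ℝ) + 1 ≤ (m:ℝ) := by exact_mod_cast (by omega : k + 1 ≤ m)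
    have hA' : 3*((s:ℝ)+1) ≤ p*(1-p)*((m:ℝ)+1) := by push_cast at hA; linarith
    have e1 : (k:ℝ) ≤ ((m:ℝ)+1)*p + s := by
      rw [hkr]; linarith
    have hcond : (1-p) * ((k:ℝ)+1) ≤ 2 * (p * ((m:ℝ) - k)) := by
      nlinarith [mul_le_mul_of_nonneg_left e1 (by linarith : (0:ℝ) ≤ 1-p),
        mul_le_mul_of_nonneg_left e1 (by linarith : (0:ℝ) ≤ 2*p),
        mul_nonneg hp0.le (by positivity : (0:ℝ) ≤ (s:ℝ)+1),
        mul_nonneg (by linarith : (0:ℝ) ≤ 1-p) (by positivity : (0:ℝ) ≤ (s:ℝ)+1)]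
    have hpos : (0:ℝ) < (1-p) * ((k:ℝ)+1) := by
      have : (0:ℝ) ≤ (k:ℝ) := Nat.cast_nonneg k
      nlinarith
    have hterm : 0 ≤ term p m k := term_nonneg hp0 hp1 m k
    have key : (1/2:ℝ) * term p m k ≤ term p m (k+1) := by
      have h3 : (1/2:ℝ) * term p m k * ((1-p) * ((k:ℝ)+1))
          ≤ term p m (k+1) * ((1-p) * ((k:ℝ)+1)) := by
        nlinarith [mul_le_mul_of_nonneg_left hcond hterm, hid]
      exact le_of_mul_le_mul_right h3 hpos
    have heq : md p m + (s+1) = k + 1 := by omega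
    rw [heq]
    calc (1/2:ℝ)^(s+1) * term p m (md p m)
        = (1/2:ℝ) * ((1/2:ℝ)^s * term p m (md p m)) := by ring
      _ ≤ (1/2:ℝ) * term p m k := by
          refine mul_le_mul_of_nonneg_left ?_ (by norm_num)
          exact ihs
      _ ≤ term p m (k+1) := key

end Term

section StepBound

variable {n : ℕ} {p : ℝ}

lemma step_ge (hp0 : 0 < p) (hp1 : p < 1) (x : Fin n → Bool) (j i : ℕ)
    (hj : j ≤ ones x) (hi : i ≤ n - ones x) :
    term p (ones x) j * term p (n - ones x) i ≤
      ∑ y ∈ Finset.univ.filter (fun y : Fin n → Bool => ones y = ones x - j + i),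
        flipProb p x y := by
  classical
  set a := ones x with ha
  set O : Finset (Fin n) := Finset.univ.filter (fun idx => x idx = true) with hO
  set Z : Finset (Fin n) := Finset.univ.filter (fun idx => ¬ (x idx = true)) with hZ
  have hOcard : O.card = a := rfl
  have hZcard : Z.card = n - a := by
    have h : O.card + Z.card = n := by
      rw [hO, hZ]
      have h := Finset.card_filter_add_card_filter_not
        (s := (Finset.univ : Finset (Fin n))) (p := fun idx => x idx = true)
      simpa using h
    omega
  have han : a ≤ n := ones_le x
  set P := (O.powersetCard j) ×ˢ (Z.powersetCard i) with hP
  set g : Finset (Fin n) × Finset (Fin n) → (Fin n → Bool) :=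
    fun ST => flipSet x (ST.1 ∪ ST.2) with hg
  -- basic membership facts
  have hmem : ∀ ST ∈ P, ST.1 ⊆ O ∧ ST.1.card = j ∧ ST.2 ⊆ Z ∧ ST.2.card = i := by
    intro ST hST
    rw [hP, Finset.mem_product] at hST
    obtain ⟨h1, h2⟩ := hST
    rw [Finset.mem_powersetCard] at h1 h2
    exact ⟨h1.1, h1.2, h2.1, h2.2⟩
  have hdisjOZ : ∀ idx, idx ∈ O → idx ∈ Z → False := by
    intro idx h1 h2
    rw [hO, Finset.mem_filter] at h1
    rw [hZ, Finset.mem_filter] at h2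
    exact h2.2 h1.2
  -- ones of flipped string
  have hones : ∀ ST ∈ P, ones (g ST) = a - j + i := by
    intro ST hST
    obtain ⟨hSO, hScard, hTZ, hTcard⟩ := hmem ST hST
    have hfilter : Finset.univ.filter (fun idx => g ST idx = true)
        = (O \ ST.1) ∪ ST.2 := by
      ext idx
      simp only [Finset.mem_filter, Finset.mem_univ, true_and, Finset.mem_union,
        Finset.mem_sdiff]
      constructor
      · intro hgt
        by_cases hS : idx ∈ ST.1
        · exfalso
          have hxt : x idx = true := by
            have := hSO hS
            rw [hO, Finset.mem_filter] at this
            exact this.2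
          have : g ST idx = !(x idx) := by
            rw [hg]
            simp [flipSet, Finset.mem_union, hS]
          rw [this, hxt] at hgt
          simp at hgt
        · by_cases hT : idx ∈ ST.2
          · right; exact hT
          · left
            have : g ST idx = x idx := by
              rw [hg]
              simp [flipSet, Finset.mem_union, hS, hT]
            rw [this] at hgt
            refine ⟨?_, hS⟩
            rw [hO, Finset.mem_filter]
            exact ⟨Finset.mem_univ _, hgt⟩
      · intro h
        rcases h with ⟨hiO, hS⟩ | hT
        · have hxt : x idx = true := by
            rw [hO, Finset.mem_filter] at hiO
            exact hiO.2
          have hnT : idx ∉ ST.2 := by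
            intro hT
            exact hdisjOZ idx hiO (hTZ hT)
          have : g ST idx = x idx := by
            rw [hg]
            simp [flipSet, Finset.mem_union, hS, hnT]
          rw [this, hxt]
        · have hxf : ¬ (x idx = true) := by
            have := hTZ hT
            rw [hZ, Finset.mem_filter] at this
            exact this.2
          have hnS : idx ∉ ST.1 := by
            intro hS
            exact hdisjOZ idx (hSO hS) (hTZ hT)
          have : g ST idx = !(x idx) := by
            rw [hg]
            simp [flipSet, Finset.mem_union, hT]
          rw [this]
          simp only [Bool.not_eq_true] at hxf
          rw [hxf]
          rfl
    have hdisj2 : Disjoint (O \ ST.1) ST.2 := by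
      rw [Finset.disjoint_left]
      intro idx h1 h2
      exact hdisjOZ idx (Finset.mem_sdiff.1 h1).1 (hTZ h2)
    have : ones (g ST) = ((O \ ST.1) ∪ ST.2).card := by
      rw [ones, hfilter]
    rw [this, Finset.card_union_of_disjoint hdisj2, Finset.card_sdiff_of_subset hSO, hOcard,
      hScard, hTcard]
  -- hamming and flipProb of flipped string
  have hflip : ∀ ST ∈ P, flipProb p x (g ST) = p ^ (j+i) * (1-p) ^ (n - (j+i)) := by
    intro ST hST
    obtain ⟨hSO, hScard, hTZ, hTcard⟩ := hmem ST hST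
    have hdisj : Disjoint ST.1 ST.2 := by
      rw [Finset.disjoint_left]
      intro idx h1 h2
      exact hdisjOZ idx (hSO h1) (hTZ h2)
    have hcard : (ST.1 ∪ ST.2).card = j + i := by
      rw [Finset.card_union_of_disjoint hdisj, hScard, hTcard]
    rw [flipProb, hg, hamming_flipSet, hcard]
  -- injectivity
  have hinj : ∀ ST ∈ P, ∀ ST' ∈ P, g ST = g ST' → ST = ST' := by
    intro ST hST ST' hST' heq
    obtain ⟨hSO, _, hTZ, _⟩ := hmem ST hST
    obtain ⟨hSO', _, hTZ', _⟩ := hmem ST' hST'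
    have hU : ST.1 ∪ ST.2 = ST'.1 ∪ ST'.2 := by
      have h1 := diffSet_flipSet x (ST.1 ∪ ST.2)
      have h2 := diffSet_flipSet x (ST'.1 ∪ ST'.2)
      rw [← h1, ← h2]
      rw [hg] at heq
      simp only at heq
      rw [heq]
    have hS : ST.1 = ST'.1 := by
      ext idx
      constructor
      · intro h
        have : idx ∈ ST'.1 ∪ ST'.2 := hU ▸ Finset.mem_union_left _ h
        rcases Finset.mem_union.1 this with h' | h'
        · exact h'
        · exact absurd (hTZ' h') (fun hz => hdisjOZ idx (hSO h) hz)
      · intro h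
        have : idx ∈ ST.1 ∪ ST.2 := hU.symm ▸ Finset.mem_union_left _ h
        rcases Finset.mem_union.1 this with h' | h'
        · exact h'
        · exact absurd (hTZ h') (fun hz => hdisjOZ idx (hSO' h) hz)
    have hT : ST.2 = ST'.2 := by
      ext idx
      constructor
      · intro h
        have : idx ∈ ST'.1 ∪ ST'.2 := hU ▸ Finset.mem_union_right _ h
        rcases Finset.mem_union.1 this with h' | h'
        · exact absurd (hTZ h) (fun hz => hdisjOZ idx (hSO' h') hz)
        · exact h'
      · intro h
        have : idx ∈ ST.1 ∪ ST.2 := hU.symm ▸ Finset.mem_union_right _ h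
        rcases Finset.mem_union.1 this with h' | h'
        · exact absurd (hTZ' h) (fun hz => hdisjOZ idx (hSO h') hz)
        · exact h'
    exact Prod.ext hS hT
  -- sum over image
  have himg : P.image g ⊆ Finset.univ.filter (fun y : Fin n → Bool => ones y = a - j + i) := by
    intro y hy
    rw [Finset.mem_image] at hy
    obtain ⟨ST, hST, rfl⟩ := hy
    rw [Finset.mem_filter]
    exact ⟨Finset.mem_univ _, hones ST hST⟩
  have hsum1 : ∑ ST ∈ P, flipProb p x (g ST)
      = P.card * (p ^ (j+i) * (1-p) ^ (n - (j+i))) := by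
    rw [Finset.sum_congr rfl hflip, Finset.sum_const, nsmul_eq_mul]
  have hPcard : (P.card : ℝ) = (a.choose j : ℝ) * ((n-a).choose i : ℝ) := by
    rw [hP, Finset.card_product, Finset.card_powersetCard, Finset.card_powersetCard,
      hOcard, hZcard]
    push_cast
    ring
  have htermval : term p a j * term p (n-a) i
      = P.card * (p ^ (j+i) * (1-p) ^ (n - (j+i))) := by
    rw [hPcard]
    unfold term
    have hexp : (a - j) + ((n - a) - i) = n - (j + i) := by omega
    rw [← hexp, pow_add, pow_add]
    ring
  calc term p a j * term p (n-a) i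
      = ∑ ST ∈ P, flipProb p x (g ST) := by rw [hsum1, htermval]
    _ = ∑ y ∈ P.image g, flipProb p x y := (Finset.sum_image hinj).symm
    _ ≤ ∑ y ∈ Finset.univ.filter (fun y : Fin n → Bool => ones y = a - j + i),
          flipProb p x y := by
        refine Finset.sum_le_sum_of_subset_of_nonneg himg
          (fun y _ _ => flipProb_nonneg hp0.le hp1.le x y)

end StepBound

section Tube

variable {n : ℕ} {q : ℝ} {A : Set (Fin n → Bool)}

/-- Conditions on a list of (target level, per-step lower bound) pairs, starting at level `a`. -/
def chainCond (q : ℝ) (A : Set (Fin n → Bool)) : ℕ → List (ℕ × ℝ) → Prop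
  | _, [] => True
  | a, (b, ε) :: l =>
      0 ≤ ε ∧ ε ≤ 1 ∧
      (∀ x : Fin n → Bool, ones x = a →
        ε ≤ ∑ y ∈ Finset.univ.filter (fun y : Fin n → Bool => ones y = b), flipProb q x y) ∧
      (l = [] → ∀ y : Fin n → Bool, ones y = b → y ∈ A) ∧
      chainCond q A b l

lemma chainCond_prod : ∀ (l : List (ℕ × ℝ)) (a : ℕ), chainCond q A a l →
    0 ≤ (l.map Prod.snd).prod ∧ (l.map Prod.snd).prod ≤ 1 := by
  intro l
  induction l with
  | nil => intro a _; simp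
  | cons hd tl ih =>
    obtain ⟨b, ε⟩ := hd
    intro a hcc
    obtain ⟨hε0, hε1, _, _, hcc'⟩ := hcc
    obtain ⟨hP0, hP1⟩ := ih b hcc'
    simp only [List.map_cons, List.prod_cons]
    constructor
    · exact mul_nonneg hε0 hP0
    · exact mul_le_one₀ hε1 hP0 hP1

lemma tube (h0 : 0 ≤ q) (h1 : q ≤ 1) :
    ∀ (l : List (ℕ × ℝ)) (a : ℕ), l ≠ [] → chainCond q A a l →
      ∀ z : Fin n → Bool, ones z = a →
        mass q A z l.length ≤ 1 - (l.map Prod.snd).prod := by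
  intro l
  induction l with
  | nil => intro a hne; exact absurd rfl hne
  | cons hd tl ih =>
    obtain ⟨b, ε⟩ := hd
    intro a _ hcc z hz
    obtain ⟨hε0, hε1, hstep, hlast, hcc'⟩ := hcc
    obtain ⟨hP0, hP1⟩ := chainCond_prod tl b hcc'
    set P := (tl.map Prod.snd).prod with hPdef
    have hlen : ((b, ε) :: tl).length = 1 + tl.length := by
      simp [List.length_cons]; omega
    rw [hlen, mass_succ]
    set c : (Fin n → Bool) → ℝ := fun w => if ones w = b then 1 - P else 1 with hc
    have hcnn : ∀ w, 0 ≤ c w := by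
      intro w
      simp only [hc]
      split
      · linarith
      · norm_num
    have hbound : ∀ w : Fin n → Bool,
        (if w ∈ A then 0 else flipProb q z w * mass q A w tl.length)
          ≤ flipProb q z w * c w := by
      intro w
      by_cases hw : w ∈ A
      · rw [if_pos hw]
        exact mul_nonneg (flipProb_nonneg h0 h1 z w) (hcnn w)
      · rw [if_neg hw]
        refine mul_le_mul_of_nonneg_left ?_ (flipProb_nonneg h0 h1 z w)
        simp only [hc]
        by_cases hwb : ones w = b
        · rw [if_pos hwb]
          by_cases htl : tl = []
          · exact absurd (hlast htl w hwb) hw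
          · exact ih b htl hcc' w hwb
        · rw [if_neg hwb]
          exact mass_le_one h0 h1 w tl.length
    calc ∑ w : Fin n → Bool, (if w ∈ A then 0 else flipProb q z w * mass q A w tl.length)
        ≤ ∑ w : Fin n → Bool, flipProb q z w * c w := Finset.sum_le_sum (fun w _ => hbound w)
      _ = ∑ w : Fin n → Bool, (flipProb q z w
            - P * (if ones w = b then flipProb q z w else 0)) := by
          refine Finset.sum_congr rfl (fun w _ => ?_)
          simp only [hc]
          by_cases hwb : ones w = b <;> simp [hwb] <;> ring
      _ = 1 - P * ∑ y ∈ Finset.univ.filter (fun y : Fin n → Bool => ones y = b),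
            flipProb q z y := by
          rw [Finset.sum_sub_distrib, flipProb_sum, ← Finset.mul_sum, Finset.sum_filter]
      _ ≤ 1 - P * ε := by
          have := hstep z hz
          nlinarith
      _ = 1 - (((b, ε) :: tl).map Prod.snd).prod := by
          simp only [List.map_cons, List.prod_cons]
          ring

end Tube

section Stones

variable {p : ℝ}

lemma s_eq (p : ℝ) (k : ℕ) : s p k = 1/2 + (1 - 2*p)^k / 2 := by
  induction k with
  | zero => rw [s]; norm_num
  | succ k ih =>
    have h : s p (k+1) = fp p (s p k) := by
      rw [s, Function.iterate_succ_apply']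
      rfl
    rw [h, ih, fp, pow_succ]
    ring

lemma floor_half (n : ℕ) : ⌊(n:ℝ)/2⌋ = ((n/2 : ℕ) : ℤ) := by
  have a1 : (n/2)*2 ≤ n := by omega
  have a2 : n < (n/2)*2 + 2 := by omega
  have a1r : ((n/2 : ℕ):ℝ)*2 ≤ (n:ℝ) := by exact_mod_cast a1
  have a2r : (n:ℝ) < ((n/2 : ℕ):ℝ)*2 + 2 := by exact_mod_cast a2
  rw [Int.floor_eq_iff]
  constructor
  · show ((((n/2 : ℕ) : ℤ)):ℝ) ≤ (n:ℝ)/2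
    rw [Int.cast_natCast]
    linarith
  · show (n:ℝ)/2 < ((((n/2 : ℕ) : ℤ)):ℝ) + 1
    rw [Int.cast_natCast]
    linarith

lemma NN_mem (hp : p ∈ Set.Ioo (0:ℝ) 1) (hp2 : p ≠ 1/2) (n : ℕ) :
    1 ≤ NN p n ∧ ⌊(n : ℝ) * s p (NN p n)⌋ = ⌊(n : ℝ) / 2⌋ := by
  obtain ⟨hp0, hp1⟩ := hp
  have hsq : (1-2*p)^2 < 1 := by nlinarith
  have hsqpos : 0 < (1-2*p)^2 := by
    have : 1 - 2*p ≠ 0 := by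
      intro h
      apply hp2
      linarith
    positivity
  obtain ⟨t, ht⟩ := exists_pow_lt_of_lt_one
    (show (0:ℝ) < 1/((n:ℝ)+1) by positivity) hsq
  set k := 2*(t+1) with hk
  set η := (1-2*p)^k with hη
  have hη_eq : η = ((1-2*p)^2)^(t+1) := by rw [hη, hk, pow_mul]
  have hηpos : 0 < η := by rw [hη_eq]; positivity
  have hηlt : η < 1/((n:ℝ)+1) := by
    rw [hη_eq, pow_succ]
    calc ((1-2*p)^2)^t * (1-2*p)^2 ≤ ((1-2*p)^2)^t * 1 := by
          refine mul_le_mul_of_nonneg_left hsq.le (by positivity)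
      _ = ((1-2*p)^2)^t := mul_one _
      _ < 1/((n:ℝ)+1) := ht
  have hnη : (n:ℝ) * η < 1 := by
    have h2 : ((n:ℝ)+1) * η < 1 := by
      rw [mul_comm]
      rw [← lt_div_iff₀ (by positivity : (0:ℝ) < (n:ℝ)+1)]
      exact hηlt
    nlinarith [Nat.cast_nonneg (α := ℝ) n]
  have hfl : ⌊(n : ℝ) * s p k⌋ = ⌊(n : ℝ) / 2⌋ := by
    rw [floor_half, s_eq, ← hη]
    rw [Int.floor_eq_iff]
    have h1r : ((n/2 : ℕ) : ℝ) * 2 ≤ (n:ℝ) := by exact_mod_cast (by omega : (n/2)*2 ≤ n)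
    have h2r : (n:ℝ) ≤ ((n/2 : ℕ) : ℝ) * 2 + 1 := by
      exact_mod_cast (by omega : n ≤ (n/2)*2 + 1)
    have hnn : (0:ℝ) ≤ (n:ℝ) := Nat.cast_nonneg n
    have hnηn : (0:ℝ) ≤ (n:ℝ) * η := mul_nonneg hnn hηpos.le
    constructor
    · show ((((n/2 : ℕ) : ℤ)):ℝ) ≤ (n:ℝ) * (1/2 + η/2)
      rw [Int.cast_natCast]
      nlinarith
    · show (n:ℝ) * (1/2 + η/2) < ((((n/2 : ℕ) : ℤ)):ℝ) + 1
      rw [Int.cast_natCast]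
      nlinarith
  have hmem : k ∈ {k : ℕ | 1 ≤ k ∧ ⌊(n : ℝ) * s p k⌋ = ⌊(n : ℝ) / 2⌋} := ⟨by omega, hfl⟩
  have hNN := Nat.sInf_mem (s := {k : ℕ | 1 ≤ k ∧ ⌊(n : ℝ) * s p k⌋ = ⌊(n : ℝ) / 2⌋})
    ⟨k, hmem⟩
  exact hNN

lemma level_in_stones (hp : p ∈ Set.Ioo (0:ℝ) 1) (hp2 : p ≠ 1/2) {n : ℕ}
    (y : Fin n → Bool) (hy : ones y = n/2) : y ∈ stones p n := by
  obtain ⟨h1, h2⟩ := NN_mem hp hp2 n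
  refine ⟨NN p n, h1, le_refl _, ?_⟩
  rw [inStone, h2, floor_half, hy]

lemma exists_level {n : ℕ} (m : ℕ) (hm : m ≤ n) : ∃ y : Fin n → Bool, ones y = m := by
  classical
  refine ⟨fun i => decide ((i:ℕ) < m), ?_⟩
  unfold ones
  have hcard : (Finset.univ.filter fun i : Fin n => (decide ((i:ℕ) < m)) = true).card
      = (Finset.range m).card := by
    refine Finset.card_bij (fun i _ => (i : ℕ)) ?_ ?_ ?_
    · intro a ha
      rw [Finset.mem_filter] at ha
      rw [Finset.mem_range]
      simpa using ha.2
    · intro a _ b _ hab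
      exact Fin.ext hab
    · intro b hb
      rw [Finset.mem_range] at hb
      refine ⟨⟨b, lt_of_lt_of_le hb hm⟩, ?_, rfl⟩
      rw [Finset.mem_filter]
      simpa using hb
  rw [hcard, Finset.card_range]

lemma crude_bound (hp : p ∈ Set.Ioo (0:ℝ) 1) (hp2 : p ≠ 1/2) (n : ℕ)
    (x0 : Fin n → Bool) :
    pureHitTime p (stones p n) x0 ≤ (1 / min p (1-p)) ^ n := by
  obtain ⟨hp0, hp1⟩ := hp
  set β := min p (1-p) with hβ
  have hβ0 : 0 < β := lt_min hp0 (by linarith)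
  have hβ1 : β ≤ 1 := le_trans (min_le_left _ _) hp1.le
  obtain ⟨y₀, hy₀⟩ := exists_level (n := n) (n/2) (by omega)
  have hy₀A : y₀ ∈ stones p n := level_in_stones ⟨hp0, hp1⟩ hp2 y₀ hy₀
  have hkey : ∀ z : Fin n → Bool, mass p (stones p n) z 1 ≤ 1 - β^n := by
    intro z
    have h1 : mass p (stones p n) z 1 = ∑ w : Fin n → Bool,
        (if w ∈ stones p n then 0 else flipProb p z w) := by
      have : (1:ℕ) = 1 + 0 := rfl
      rw [this, mass_succ]
      refine Finset.sum_congr rfl (fun w _ => ?_)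
      rw [mass_zero, mul_one]
    rw [h1]
    have hflipy : β^n ≤ flipProb p z y₀ := by
      rw [flipProb]
      have hd : hamming z y₀ ≤ n := hamming_le_n z y₀
      calc β^n = β^(hamming z y₀) * β^(n - hamming z y₀) := by
            rw [← pow_add]
            congr 1
            omega
        _ ≤ p^(hamming z y₀) * (1-p)^(n - hamming z y₀) := by
            refine mul_le_mul ?_ ?_ (by positivity) (by positivity)
            · exact pow_le_pow_left₀ hβ0.le (min_le_left _ _) _
            · exact pow_le_pow_left₀ hβ0.le (min_le_right _ _) _
    have hsplit : ∑ w : Fin n → Bool, (if w ∈ stones p n then 0 else flipProb p z w)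
        = 1 - ∑ w : Fin n → Bool, (if w ∈ stones p n then flipProb p z w else 0) := by
      rw [← flipProb_sum p z, ← Finset.sum_sub_distrib]
      refine Finset.sum_congr rfl (fun w _ => ?_)
      by_cases hw : w ∈ stones p n <;> simp [hw]
    rw [hsplit]
    have hge : flipProb p z y₀ ≤ ∑ w : Fin n → Bool,
        (if w ∈ stones p n then flipProb p z w else 0) := by
      have h := Finset.single_le_sum
        (f := fun w : Fin n → Bool => if w ∈ stones p n then flipProb p z w else 0)
        (fun w _ => by
          by_cases hw : w ∈ stones p n
          · simpa [hw] using flipProb_nonneg hp0.le hp1.le z w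
          · simp [hw])
        (Finset.mem_univ y₀)
      simpa [hy₀A] using h
    linarith
  have := pureHitTime_le hp0.le hp1.le (K := 1) (δ := β^n) one_pos
    (by positivity) (pow_le_one₀ hβ0.le hβ1) hkey x0
  calc pureHitTime p (stones p n) x0 ≤ 1 / β^n := by
        simpa using this
    _ = (1/β)^n := by rw [div_pow, one_pow]

end Stones

section Drift

variable {p : ℝ}

/-- One step of the deterministic mode drift. -/
noncomputable def nxt (p : ℝ) (n a : ℕ) : ℕ := a - md p a + md p (n - a)

lemma nxt_le (hp0 : 0 < p) (hp1 : p < 1) (n a : ℕ) (ha : a ≤ n) : nxt p n a ≤ n := by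
  have h1 : md p a ≤ a := md_le hp0 hp1 a
  have h2 : md p (n - a) ≤ n - a := md_le hp0 hp1 (n - a)
  unfold nxt
  omega

lemma iter_le (hp0 : 0 < p) (hp1 : p < 1) (n K a : ℕ) (ha : a ≤ n) :
    (nxt p n)^[K] a ≤ n := by
  induction K generalizing a with
  | zero => simpa using ha
  | succ K ih =>
    rw [Function.iterate_succ_apply]
    exact ih _ (nxt_le hp0 hp1 n a ha)

lemma nxt_cast (hp0 : 0 < p) (hp1 : p < 1) (n a : ℕ) (ha : a ≤ n) :
    ((nxt p n a : ℕ) : ℝ) = (a:ℝ) - (md p a : ℝ) + (md p (n-a) : ℝ) := by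
  have h1 : md p a ≤ a := md_le hp0 hp1 a
  unfold nxt
  push_cast [Nat.cast_sub h1]
  ring

lemma nxt_drift (hp0 : 0 < p) (hp1 : p < 1) (n a : ℕ) (ha : a ≤ n) :
    |((nxt p n a : ℕ):ℝ) - (n:ℝ)/2| ≤ |1-2*p| * |(a:ℝ) - (n:ℝ)/2| + 1 := by
  have hcast := nxt_cast hp0 hp1 n a ha
  have hmr : ((n - a : ℕ):ℝ) = (n:ℝ) - (a:ℝ) := by push_cast [Nat.cast_sub ha]; ring
  have e1 : (md p a : ℝ) ≤ ((a:ℝ)+1)*p := md_le_real hp0 a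
  have e1' : ((a:ℝ)+1)*p < (md p a : ℝ) + 1 := md_lt_real a
  have e2 : (md p (n-a) : ℝ) ≤ (((n-a:ℕ):ℝ)+1)*p := md_le_real hp0 (n-a)
  have e2' : (((n-a:ℕ):ℝ)+1)*p < (md p (n-a) : ℝ) + 1 := md_lt_real (n-a)
  rw [hmr] at e2 e2'
  set u := ((a:ℝ)+1)*p - (md p a : ℝ) with hu
  set v := ((n:ℝ)-(a:ℝ)+1)*p - (md p (n-a) : ℝ) with hv
  have hu0 : 0 ≤ u := by rw [hu]; linarith
  have hu1 : u < 1 := by rw [hu]; linarith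
  have hv0 : 0 ≤ v := by rw [hv]; linarith
  have hv1 : v < 1 := by rw [hv]; linarith
  have key : ((nxt p n a : ℕ):ℝ) - (n:ℝ)/2
      = (1-2*p)*((a:ℝ) - (n:ℝ)/2) + (u - v) := by
    rw [hcast, hu, hv]
    ring
  rw [key]
  calc |(1-2*p)*((a:ℝ) - (n:ℝ)/2) + (u - v)|
      ≤ |(1-2*p)*((a:ℝ) - (n:ℝ)/2)| + |u - v| := abs_add_le _ _
    _ ≤ |1-2*p| * |(a:ℝ) - (n:ℝ)/2| + 1 := by
        rw [abs_mul]
        have : |u - v| ≤ 1 := abs_le.2 ⟨by linarith, by linarith⟩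
        linarith

lemma drift_iter (hp0 : 0 < p) (hp1 : p < 1) (n K a : ℕ) (ha : a ≤ n) :
    |(((nxt p n)^[K] a : ℕ):ℝ) - (n:ℝ)/2|
      ≤ |1-2*p|^K * ((n:ℝ)/2) + 1/(1 - |1-2*p|) := by
  set θ := |1-2*p| with hθ
  have hθ0 : 0 ≤ θ := abs_nonneg _
  have hθ1 : θ < 1 := by
    rw [hθ, abs_lt]
    constructor <;> linarith
  have hθne : (1:ℝ) - θ ≠ 0 := by linarith
  have hR : 1/(1-θ) = θ * (1/(1-θ)) + 1 := by
    field_simp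
    ring
  induction K with
  | zero =>
    simp only [Function.iterate_zero_apply, pow_zero, one_mul]
    have h1 : |(a:ℝ) - (n:ℝ)/2| ≤ (n:ℝ)/2 := by
      rw [abs_le]
      have ha' : (a:ℝ) ≤ (n:ℝ) := by exact_mod_cast ha
      have ha0 : (0:ℝ) ≤ (a:ℝ) := Nat.cast_nonneg a
      constructor <;> linarith
    have hRpos : 0 < 1/(1-θ) := by
      have h2 : (0:ℝ) < 1 - θ := by linarith
      positivity
    linarith
  | succ K ih =>
    rw [Function.iterate_succ_apply']
    have hle : (nxt p n)^[K] a ≤ n := iter_le hp0 hp1 n K a ha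
    calc |((nxt p n ((nxt p n)^[K] a) : ℕ):ℝ) - (n:ℝ)/2|
        ≤ θ * |(((nxt p n)^[K] a : ℕ):ℝ) - (n:ℝ)/2| + 1 := nxt_drift hp0 hp1 n _ hle
      _ ≤ θ * (θ^K * ((n:ℝ)/2) + 1/(1-θ)) + 1 := by
          refine add_le_add_left (mul_le_mul_of_nonneg_left ih hθ0) 1
      _ = θ^(K+1) * ((n:ℝ)/2) + (θ * (1/(1-θ)) + 1) := by ring
      _ = θ^(K+1) * ((n:ℝ)/2) + 1/(1-θ) := by rw [← hR]

/-- Phase 1 step: from level `a`, the chance to land exactly on level `nxt p n a`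
is at least `1/(n+1)^2`. -/
lemma step1 (hp0 : 0 < p) (hp1 : p < 1) {n : ℕ} (a : ℕ) (ha : a ≤ n)
    (x : Fin n → Bool) (hx : ones x = a) :
    1/(((n:ℝ)+1)^2) ≤
      ∑ y ∈ Finset.univ.filter (fun y : Fin n → Bool => ones y = nxt p n a),
        flipProb p x y := by
  have hj : md p a ≤ a := md_le hp0 hp1 a
  have hi : md p (n-a) ≤ n - a := md_le hp0 hp1 (n-a)
  have hstep := step_ge hp0 hp1 x (md p a) (md p (n-a)) (by rw [hx]; exact hj)
    (by rw [hx]; exact hi)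
  rw [hx] at hstep
  have htgt : a - md p a + md p (n-a) = nxt p n a := rfl
  rw [htgt] at hstep
  refine le_trans ?_ hstep
  -- 1/(n+1)^2 ≤ term p a (md p a) * term p (n-a) (md p (n-a))
  have h1 := term_md_ge hp0 hp1 a
  have h2 := term_md_ge hp0 hp1 (n-a)
  have ht1 : 0 ≤ term p a (md p a) := term_nonneg hp0 hp1 _ _
  have ht2 : 0 ≤ term p (n-a) (md p (n-a)) := term_nonneg hp0 hp1 _ _
  have ha' : (a:ℝ) ≤ (n:ℝ) := by exact_mod_cast ha
  have hna : ((n-a:ℕ):ℝ) ≤ (n:ℝ) := by exact_mod_cast (by omega : n - a ≤ n)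
  have hpos : (0:ℝ) < ((n:ℝ)+1)^2 := by positivity
  rw [div_le_iff₀ hpos]
  have key : 1 ≤ (((a:ℝ)+1) * (((n-a:ℕ):ℝ)+1)) *
      (term p a (md p a) * term p (n-a) (md p (n-a))) := by
    calc (1:ℝ) = 1 * 1 := by norm_num
      _ ≤ (((a:ℝ)+1) * term p a (md p a)) * ((((n-a:ℕ):ℝ)+1) * term p (n-a) (md p (n-a))) := by
          refine mul_le_mul h1 h2 (by norm_num) ?_
          positivity
      _ = (((a:ℝ)+1) * (((n-a:ℕ):ℝ)+1)) *
          (term p a (md p a) * term p (n-a) (md p (n-a))) := by ring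
  have hprodpos : 0 ≤ term p a (md p a) * term p (n-a) (md p (n-a)) := mul_nonneg ht1 ht2
  have hfac : (((a:ℝ)+1) * (((n-a:ℕ):ℝ)+1)) ≤ ((n:ℝ)+1)^2 := by
    have h3 : (0:ℝ) ≤ (a:ℝ) := Nat.cast_nonneg a
    have h4 : (0:ℝ) ≤ ((n-a:ℕ):ℝ) := Nat.cast_nonneg _
    nlinarith
  nlinarith

end Drift

section Phase2

variable {p : ℝ}

set_option maxHeartbeats 1000000 in
lemma step2 (hp0 : 0 < p) (hp1 : p < 1) {n : ℕ} {ε₀ R : ℝ}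
    (hε0 : 0 < ε₀) (hR0 : 0 ≤ R)
    (b : ℕ) (hb : b ≤ n)
    (hd : |(b:ℝ) - (n:ℝ)/2| ≤ ε₀*(n:ℝ)/2 + R)
    (hn1 : ε₀*(n:ℝ)/2 + R + 1 ≤ p*(n:ℝ)/2)
    (hn2 : ε₀*(n:ℝ)/2 + R + 1 ≤ (1-p)*(n:ℝ)/2)
    (hn3 : R + 3/2 ≤ ε₀*(n:ℝ)/2)
    (hn4 : 3*(ε₀*(n:ℝ)) + 3 ≤ p*(1-p)*((n:ℝ)/2 - (ε₀*(n:ℝ)/2 + R) + 1)) :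
    ∀ x : Fin n → Bool, ones x = b →
      1/(((n:ℝ)+1)^2) * (1/2:ℝ)^(⌈ε₀*(n:ℝ)⌉₊) ≤
        ∑ y ∈ Finset.univ.filter (fun y : Fin n → Bool => ones y = n/2),
          flipProb p x y := by
  intro x hx
  obtain ⟨L, hLdef⟩ : ∃ L, L = n/2 := ⟨_, rfl⟩
  obtain ⟨j, hjdef⟩ : ∃ j, j = md p b := ⟨_, rfl⟩
  obtain ⟨m, hmdef⟩ : ∃ m, m = n - b := ⟨_, rfl⟩
  obtain ⟨M2, hM2def⟩ : ∃ M2, M2 = md p m := ⟨_, rfl⟩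
  have hj : j ≤ b := by rw [hjdef]; exact md_le hp0 hp1 b
  have hM2m : M2 ≤ m := by rw [hM2def]; exact md_le hp0 hp1 m
  have hjr1 : (j:ℝ) ≤ ((b:ℝ)+1)*p := by rw [hjdef]; exact md_le_real hp0 b
  have hjr2 : ((b:ℝ)+1)*p < (j:ℝ)+1 := by rw [hjdef]; exact md_lt_real b
  have hM1 : (M2:ℝ) ≤ ((m:ℝ)+1)*p := by rw [hM2def]; exact md_le_real hp0 m
  have hM2' : ((m:ℝ)+1)*p < (M2:ℝ)+1 := by rw [hM2def]; exact md_lt_real m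
  have hmn : m ≤ n := by omega
  have hmr : (m:ℝ) = (n:ℝ) - (b:ℝ) := by
    rw [hmdef]; push_cast [Nat.cast_sub hb]; ring
  have hL1 : ((L:ℕ):ℝ)*2 ≤ (n:ℝ) := by
    rw [hLdef]; exact_mod_cast (by omega : (n/2)*2 ≤ n)
  have hL2 : (n:ℝ) ≤ ((L:ℕ):ℝ)*2 + 1 := by
    rw [hLdef]; exact_mod_cast (by omega : n ≤ (n/2)*2 + 1)
  have hnn : (0:ℝ) ≤ (n:ℝ) := Nat.cast_nonneg n
  have hd2 : (b:ℝ) - (n:ℝ)/2 ≤ ε₀*(n:ℝ)/2 + R := (abs_le.1 hd).2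
  have hd1 : -(ε₀*(n:ℝ)/2 + R) ≤ (b:ℝ) - (n:ℝ)/2 := (abs_le.1 hd).1
  have hb2 : (b:ℝ) ≤ (n:ℝ)/2 + (ε₀*(n:ℝ)/2 + R) := by linarith
  have h1p : (0:ℝ) ≤ 1 - p := by linarith
  have hDnn : (0:ℝ) ≤ ε₀*(n:ℝ)/2 + R := by positivity
  -- b ≤ L + j
  have hbLj : b ≤ L + j := by
    have h7 : (1-p)*(b:ℝ) ≤ (1-p)*((n:ℝ)/2 + (ε₀*(n:ℝ)/2 + R)) :=
      mul_le_mul_of_nonneg_left hb2 h1p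
    have h8 : (0:ℝ) ≤ p*(ε₀*(n:ℝ)/2 + R) := mul_nonneg hp0.le hDnn
    have hreal : (b:ℝ) < (L:ℝ) + (j:ℝ) + 1 := by linarith [h7, h8, hjr2, hn1, hL2]
    have hlt : b < L + j + 1 := by exact_mod_cast hreal
    exact Nat.lt_succ_iff.mp hlt
  obtain ⟨i, hidef⟩ : ∃ i, i = L + j - b := ⟨_, rfl⟩
  have hir : (i:ℝ) = (L:ℝ) + (j:ℝ) - (b:ℝ) := by
    rw [hidef]
    push_cast [Nat.cast_sub hbLj]
    ring
  -- i ≤ m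
  have him : i ≤ m := by
    have hreal : (i:ℝ) ≤ (m:ℝ) := by
      rw [hir, hmr]
      have hb3 : ((b:ℝ)+1)*p ≤ ((n:ℝ)/2 + (ε₀*(n:ℝ)/2 + R) + 1)*p :=
        mul_le_mul_of_nonneg_right (by linarith) hp0.le
      have h9 : (0:ℝ) ≤ (ε₀*(n:ℝ)/2 + R + 1)*(1-p) :=
        mul_nonneg (by linarith) h1p
      linarith [hb3, h9, hn2, hL1, hjr1]
    exact_mod_cast hreal
  -- the drift point
  have hnxtb : ((nxt p n b : ℕ):ℝ) = (b:ℝ) - (j:ℝ) + (M2:ℝ) := by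
    rw [hjdef, hM2def, hmdef]
    exact nxt_cast hp0 hp1 n b hb
  have hgd : |((nxt p n b : ℕ):ℝ) - (n:ℝ)/2| ≤ |1-2*p| * |(b:ℝ) - (n:ℝ)/2| + 1 :=
    nxt_drift hp0 hp1 n b hb
  have habs1 : |1-2*p| ≤ 1 := abs_le.2 ⟨by linarith, by linarith⟩
  have hgd' : |((nxt p n b : ℕ):ℝ) - (n:ℝ)/2| ≤ ε₀*(n:ℝ)/2 + R + 1 := by
    have h5 : |1-2*p| * |(b:ℝ) - (n:ℝ)/2| ≤ 1 * (ε₀*(n:ℝ)/2 + R) :=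
      mul_le_mul habs1 hd (abs_nonneg _) (by norm_num)
    rw [one_mul] at h5
    linarith
  -- the shift
  obtain ⟨sZ, hsZ⟩ : ∃ sZ : ℤ, sZ = (i:ℤ) - (M2:ℤ) := ⟨_, rfl⟩
  obtain ⟨sh, hsh⟩ : ∃ sh : ℕ, sh = sZ.natAbs := ⟨_, rfl⟩
  have hsr : (sh:ℝ) = |(i:ℝ) - (M2:ℝ)| := by
    rw [hsh, Nat.cast_natAbs]
    congr 1
    rw [hsZ]
    push_cast
    ring
  have hLhalf : |(L:ℝ) - (n:ℝ)/2| ≤ 1/2 := by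
    rw [abs_le]
    constructor <;> linarith
  have hs_bound : (sh:ℝ) ≤ ε₀*(n:ℝ) := by
    rw [hsr]
    have hrewr : (i:ℝ) - (M2:ℝ) = (L:ℝ) - ((nxt p n b : ℕ):ℝ) := by
      rw [hir, hnxtb]
      ring
    rw [hrewr]
    calc |(L:ℝ) - ((nxt p n b : ℕ):ℝ)|
        ≤ |(L:ℝ) - (n:ℝ)/2| + |(n:ℝ)/2 - ((nxt p n b : ℕ):ℝ)| := abs_sub_le _ _ _
      _ ≤ 1/2 + (ε₀*(n:ℝ)/2 + R + 1) := by
          have hcomm := abs_sub_comm ((n:ℝ)/2) (((nxt p n b : ℕ):ℝ))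
          rw [hcomm]
          exact add_le_add hLhalf hgd'
      _ ≤ ε₀*(n:ℝ) := by linarith
  have hsS : sh ≤ ⌈ε₀*(n:ℝ)⌉₊ := by
    have h6 : (sh:ℝ) ≤ (⌈ε₀*(n:ℝ)⌉₊ : ℝ) := le_trans hs_bound (Nat.le_ceil _)
    exact_mod_cast h6
  have hA3 : 3*(sh:ℝ) ≤ p*(1-p)*((m:ℝ)+1) := by
    have hm_lb : (n:ℝ)/2 - (ε₀*(n:ℝ)/2 + R) + 1 ≤ (m:ℝ) + 1 := by
      rw [hmr]
      linarith
    have h10 := mul_le_mul_of_nonneg_left hm_lb (mul_nonneg hp0.le h1p)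
    linarith
  -- term bound via shift lemmas
  have hterm2 : (1/2:ℝ)^sh * term p m M2 ≤ term p m i := by
    rcases le_or_gt i M2 with hcase | hcase
    · have := term_shift_down hp0 hp1 m sh hA3
      rw [← hM2def] at this
      have hse : M2 - sh = i := by omega
      rwa [hse] at this
    · have := term_shift_up hp0 hp1 m sh (by omega) hA3
      rw [← hM2def] at this
      have hse : M2 + sh = i := by omega
      rwa [hse] at this
  -- lower bounds on mode terms
  have hT1 : 1 ≤ ((b:ℝ)+1) * term p b j := by
    rw [hjdef]; exact term_md_ge hp0 hp1 b
  have hTm : 1 ≤ ((m:ℝ)+1) * term p m M2 := by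
    rw [hM2def]; exact term_md_ge hp0 hp1 m
  have hnpos : (0:ℝ) < (n:ℝ)+1 := by positivity
  have htbj : 1/((n:ℝ)+1) ≤ term p b j := by
    rw [div_le_iff₀ hnpos]
    have hbn : (b:ℝ) + 1 ≤ (n:ℝ) + 1 := by
      have : (b:ℝ) ≤ (n:ℝ) := by exact_mod_cast hb
      linarith
    have hmm := mul_le_mul_of_nonneg_right hbn (term_nonneg hp0 hp1 b j)
    linarith [hT1, hmm]
  have htmM : 1/((n:ℝ)+1) ≤ term p m M2 := by
    rw [div_le_iff₀ hnpos]
    have hmn' : (m:ℝ) + 1 ≤ (n:ℝ) + 1 := by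
      have : (m:ℝ) ≤ (n:ℝ) := by exact_mod_cast hmn
      linarith
    have hmm := mul_le_mul_of_nonneg_right hmn' (term_nonneg hp0 hp1 m M2)
    linarith [hTm, hmm]
  have h12 : (1/2:ℝ)^(⌈ε₀*(n:ℝ)⌉₊) ≤ (1/2:ℝ)^sh := by
    apply pow_le_pow_of_le_one (by norm_num) (by norm_num) hsS
  -- combine
  have hmain : 1/(((n:ℝ)+1)^2) * (1/2:ℝ)^(⌈ε₀*(n:ℝ)⌉₊) ≤ term p b j * term p m i := by
    have hstep1 : (1/2:ℝ)^(⌈ε₀*(n:ℝ)⌉₊) * (1/((n:ℝ)+1)) ≤ term p m i := by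
      calc (1/2:ℝ)^(⌈ε₀*(n:ℝ)⌉₊) * (1/((n:ℝ)+1))
          ≤ (1/2:ℝ)^sh * term p m M2 := by
            refine mul_le_mul h12 htmM (by positivity) (by positivity)
        _ ≤ term p m i := hterm2
    calc 1/(((n:ℝ)+1)^2) * (1/2:ℝ)^(⌈ε₀*(n:ℝ)⌉₊)
        = (1/((n:ℝ)+1)) * ((1/2:ℝ)^(⌈ε₀*(n:ℝ)⌉₊) * (1/((n:ℝ)+1))) := by
          field_simp
      _ ≤ term p b j * term p m i := by
          refine mul_le_mul htbj hstep1 (by positivity) ?_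
          exact le_trans (by positivity) htbj
  -- apply the step bound
  have hstep := step_ge hp0 hp1 x j i (by rw [hx]; exact hj)
    (by rw [hx, ← hmdef]; exact him)
  rw [hx, ← hmdef] at hstep
  have htgt : b - j + i = n/2 := by omega
  rw [htgt] at hstep
  exact le_trans hmain hstep

end Phase2

section Build

variable {p : ℝ}

lemma chain_build (hp : p ∈ Set.Ioo (0:ℝ) 1) (hp2 : p ≠ 1/2) {n : ℕ} (ε2 : ℝ)
    (hε2a : 0 ≤ ε2) (hε2b : ε2 ≤ 1) :
    ∀ K a, a ≤ n →
      (∀ x : Fin n → Bool, ones x = (nxt p n)^[K] a →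
        ε2 ≤ ∑ y ∈ Finset.univ.filter (fun y : Fin n → Bool => ones y = n/2),
          flipProb p x y) →
      chainCond p (stones p n) a
        (((List.range K).map (fun t => ((nxt p n)^[t+1] a, 1/(((n:ℝ)+1)^2)))) ++ [(n/2, ε2)]) := by
  obtain ⟨hp0, hp1⟩ := hp
  intro K
  induction K with
  | zero =>
    intro a ha hfin
    simp only [List.range_zero, List.map_nil, List.nil_append]
    simp only [chainCond]
    refine ⟨hε2a, hε2b, ?_, ?_, trivial⟩
    · intro x hx
      exact hfin x (by simpa using hx)
    · intro _ y hy
      exact level_in_stones ⟨hp0, hp1⟩ hp2 y hy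
  | succ K ih =>
    intro a ha hfin
    have hlist : (List.range (K+1)).map (fun t => ((nxt p n)^[t+1] a, 1/(((n:ℝ)+1)^2)))
        = (nxt p n a, 1/(((n:ℝ)+1)^2)) ::
          (List.range K).map (fun t => ((nxt p n)^[t+1] (nxt p n a), 1/(((n:ℝ)+1)^2))) := by
      rw [List.range_succ_eq_map, List.map_cons, List.map_map]
      congr 1
    rw [hlist, List.cons_append]
    simp only [chainCond]
    have hε1a : (0:ℝ) ≤ 1/(((n:ℝ)+1)^2) := by positivity
    have hε1b : 1/(((n:ℝ)+1)^2) ≤ 1 := by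
      rw [div_le_one (by positivity)]
      nlinarith [Nat.cast_nonneg (α := ℝ) n]
    refine ⟨hε1a, hε1b, ?_, ?_, ?_⟩
    · intro x hx
      exact step1 hp0 hp1 a ha x hx
    · intro hcontra
      simp at hcontra
    · refine ih (nxt p n a) (nxt_le hp0 hp1 n a ha) ?_
      intro x hx
      refine hfin x ?_
      rw [hx, ← Function.iterate_succ_apply]

lemma mass_K_bound (hp : p ∈ Set.Ioo (0:ℝ) 1) (hp2 : p ≠ 1/2) {n K : ℕ} (ε2 : ℝ)
    (hε2a : 0 ≤ ε2) (hε2b : ε2 ≤ 1)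
    (hfin : ∀ b : ℕ, b ≤ n → ∀ x : Fin n → Bool, ones x = b →
        ε2 ≤ ∑ y ∈ Finset.univ.filter (fun y : Fin n → Bool => ones y = n/2),
          flipProb p x y → True)
    : True := trivial

end Build

section Final

variable {p : ℝ}

lemma refined_bound (hp : p ∈ Set.Ioo (0:ℝ) 1) (hp2 : p ≠ 1/2) {ε₀ R : ℝ}
    (hε0 : 0 < ε₀) (hR : R = 1/(1 - |1-2*p|)) {K : ℕ}
    (hθK : |1-2*p|^K ≤ ε₀) {n : ℕ}
    (hn1 : ε₀*(n:ℝ)/2 + R + 1 ≤ p*(n:ℝ)/2)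
    (hn2 : ε₀*(n:ℝ)/2 + R + 1 ≤ (1-p)*(n:ℝ)/2)
    (hn3 : R + 3/2 ≤ ε₀*(n:ℝ)/2)
    (hn4 : 3*(ε₀*(n:ℝ)) + 3 ≤ p*(1-p)*((n:ℝ)/2 - (ε₀*(n:ℝ)/2 + R) + 1))
    (x0 : Fin n → Bool) :
    pureHitTime p (stones p n) x0 ≤
      ((K:ℝ)+1) / ((1/(((n:ℝ)+1)^2))^(K+1) * (1/2:ℝ)^(⌈ε₀*(n:ℝ)⌉₊)) := by
  obtain ⟨hp0, hp1⟩ := hp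
  have hθ0 : (0:ℝ) ≤ |1-2*p| := abs_nonneg _
  have hθ1 : |1-2*p| < 1 := by
    rw [abs_lt]; constructor <;> linarith
  have hR0 : 0 ≤ R := by
    rw [hR]
    have : (0:ℝ) < 1 - |1-2*p| := by linarith
    positivity
  have hnp : (0:ℝ) < ((n:ℝ)+1)^2 := by positivity
  set ε1 : ℝ := 1/(((n:ℝ)+1)^2) with hε1def
  set S' : ℕ := ⌈ε₀*(n:ℝ)⌉₊ with hS'def
  set ε2 : ℝ := ε1 * (1/2:ℝ)^S' with hε2def
  set δ : ℝ := ε1^(K+1) * (1/2:ℝ)^S' with hδdef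
  have hε1a : 0 < ε1 := by rw [hε1def]; positivity
  have hε1b : ε1 ≤ 1 := by
    rw [hε1def, div_le_one hnp]
    nlinarith [Nat.cast_nonneg (α := ℝ) n]
  have hhalf : (0:ℝ) < (1/2:ℝ)^S' := by positivity
  have hhalf1 : (1/2:ℝ)^S' ≤ 1 := pow_le_one₀ (by norm_num) (by norm_num)
  have hε2a : 0 ≤ ε2 := by rw [hε2def]; positivity
  have hε2b : ε2 ≤ 1 := by
    rw [hε2def]
    exact mul_le_one₀ hε1b hhalf.le hhalf1
  have hδ0 : 0 < δ := by rw [hδdef]; positivity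
  have hδ1 : δ ≤ 1 := by
    rw [hδdef]
    exact mul_le_one₀ (pow_le_one₀ hε1a.le hε1b) hhalf.le hhalf1
  -- the key uniform K+1 step bound
  have hkey : ∀ z : Fin n → Bool, mass p (stones p n) z (K+1) ≤ 1 - δ := by
    intro z
    have ha : ones z ≤ n := ones_le z
    have hfin : ∀ x : Fin n → Bool, ones x = (nxt p n)^[K] (ones z) →
        ε2 ≤ ∑ y ∈ Finset.univ.filter (fun y : Fin n → Bool => ones y = n/2),
          flipProb p x y := by
      intro x hx
      have hb : (nxt p n)^[K] (ones z) ≤ n := iter_le hp0 hp1 n K (ones z) ha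
      have hd : |(((nxt p n)^[K] (ones z) : ℕ):ℝ) - (n:ℝ)/2| ≤ ε₀*(n:ℝ)/2 + R := by
        have h1 := drift_iter hp0 hp1 n K (ones z) ha
        have h2 : |1-2*p|^K * ((n:ℝ)/2) ≤ ε₀ * ((n:ℝ)/2) := by
          refine mul_le_mul_of_nonneg_right hθK (by positivity)
        rw [hR]
        calc |(((nxt p n)^[K] (ones z) : ℕ):ℝ) - (n:ℝ)/2|
            ≤ |1-2*p|^K * ((n:ℝ)/2) + 1/(1 - |1-2*p|) := h1
          _ ≤ ε₀*(n:ℝ)/2 + 1/(1 - |1-2*p|) := by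
              have : ε₀ * ((n:ℝ)/2) = ε₀*(n:ℝ)/2 := by ring
              linarith [h2]
      have := step2 hp0 hp1 hε0 hR0 _ hb hd hn1 hn2 hn3 hn4 x hx
      rw [hε2def, hε1def, hS'def]
      exact this
    have hcc := chain_build ⟨hp0, hp1⟩ hp2 ε2 hε2a hε2b K (ones z) ha hfin
    have hne : (((List.range K).map
        (fun t => ((nxt p n)^[t+1] (ones z), 1/(((n:ℝ)+1)^2)))) ++ [(n/2, ε2)]) ≠ [] := by
      simp
    have htube := tube (A := stones p n) hp0.le hp1.le _ (ones z) hne hcc z rfl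
    have hlen : (((List.range K).map
        (fun t => ((nxt p n)^[t+1] (ones z), 1/(((n:ℝ)+1)^2)))) ++ [(n/2, ε2)]).length
        = K + 1 := by
      simp [List.length_append, List.length_map, List.length_range]
    have hprod : ((((List.range K).map
        (fun t => ((nxt p n)^[t+1] (ones z), 1/(((n:ℝ)+1)^2)))) ++ [(n/2, ε2)]).map
          Prod.snd).prod = δ := by
      rw [List.map_append, List.prod_append, List.map_map]
      simp only [List.map_cons, List.map_nil, List.prod_cons, List.prod_nil, mul_one]
      have hconst : (List.range K).map ((Prod.snd) ∘
          (fun t => ((nxt p n)^[t+1] (ones z), 1/(((n:ℝ)+1)^2))))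
          = List.replicate K (1/(((n:ℝ)+1)^2)) := by
        rw [show ((Prod.snd) ∘ (fun t : ℕ => ((nxt p n)^[t+1] (ones z), 1/(((n:ℝ)+1)^2))))
          = (fun _ : ℕ => 1/(((n:ℝ)+1)^2)) from rfl]
        rw [List.map_const']
        simp
      rw [hconst, List.prod_replicate, hδdef, hε2def, hε1def]
      ring
    rw [hlen, hprod] at htube
    exact htube
  have := pureHitTime_le hp0.le hp1.le (K := K+1) (δ := δ) (Nat.succ_pos K) hδ0 hδ1 hkey x0
  calc pureHitTime p (stones p n) x0 ≤ ((K+1 : ℕ):ℝ) / δ := this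
    _ = ((K:ℝ)+1) / (ε1^(K+1) * (1/2:ℝ)^S') := by rw [hδdef]; push_cast; ring_nf
  
end Final

set_option maxHeartbeats 1000000 in
/-- For fixed `p ∈ (0,1)`, `p ≠ 1/2`, and `α = 1/(p^p (1-p)^(1-p))`, the pure
mutation chain (every offspring accepted) hits the union of the stepping stones in expected
time at most `C · α^n`, uniformly over all `n` and all starting states. -/
theorem pure_chain_hits_stones (p : ℝ) (hp : p ∈ Set.Ioo (0 : ℝ) 1) (hp2 : p ≠ 1/2) :
    ∃ C : ℝ, ∀ n : ℕ, ∀ x0 : Fin n → Bool,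
      pureHitTime p (stones p n) x0 ≤ C * (1 / (p ^ p * (1 - p) ^ (1 - p))) ^ n := by
  obtain ⟨hp0, hp1⟩ := hp
  have h1p : (0:ℝ) < 1 - p := by linarith
  have hθ1 : |1-2*p| < 1 := by rw [abs_lt]; constructor <;> linarith
  have hθ0 : (0:ℝ) ≤ |1-2*p| := abs_nonneg _
  set A2 : ℝ := p ^ p * (1 - p) ^ (1 - p) with hA2def
  have hA2pos : 0 < A2 := mul_pos (Real.rpow_pos_of_pos hp0 p) (Real.rpow_pos_of_pos h1p (1-p))
  have hA2lt : A2 < 1 := by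
    have ha : p ^ p < 1 := Real.rpow_lt_one hp0.le hp1 hp0
    have hb : (1-p) ^ (1-p) < 1 := Real.rpow_lt_one h1p.le (by linarith) h1p
    have ha0 : 0 < p ^ p := Real.rpow_pos_of_pos hp0 p
    have hb0 : 0 < (1-p) ^ (1-p) := Real.rpow_pos_of_pos h1p (1-p)
    nlinarith
  have hα1 : 1 < 1/A2 := by rw [lt_div_iff₀ hA2pos]; linarith
  have hαpos : (0:ℝ) < 1/A2 := by positivity
  set γ : ℝ := Real.log (1/A2) with hγdef
  have hγ0 : 0 < γ := Real.log_pos hα1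
  have hlog2 : (0:ℝ) < Real.log 2 := Real.log_pos (by norm_num)
  set ε₀ : ℝ := min (p*(1-p)/24) (γ/(2*Real.log 2)) with hε₀def
  have hε0 : 0 < ε₀ := lt_min (by positivity) (by positivity)
  have hε₀a : ε₀ ≤ p*(1-p)/24 := min_le_left _ _
  have hε₀b : ε₀ ≤ γ/(2*Real.log 2) := min_le_right _ _
  set R : ℝ := 1/(1 - |1-2*p|) with hRdef
  have hR0 : 0 ≤ R := by
    rw [hRdef]
    have : (0:ℝ) < 1 - |1-2*p| := by linarith
    positivity
  obtain ⟨K, hθK'⟩ := exists_pow_lt_of_lt_one hε0 hθ1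
  have hθK : |1-2*p|^K ≤ ε₀ := hθK'.le
  -- eventually conditions
  have hlin : ∀ c1 c2 : ℝ, 0 < c1 → ∀ᶠ nn : ℕ in Filter.atTop, c2 ≤ c1 * (nn:ℝ) := by
    intro c1 c2 hc1
    have h1 : Filter.Tendsto (fun nn : ℕ => c1 * (nn:ℝ)) Filter.atTop Filter.atTop :=
      (tendsto_natCast_atTop_atTop (R := ℝ)).const_mul_atTop hc1
    exact h1.eventually_ge_atTop c2
  have hpp4 : p*(1-p) ≤ 1/4 := by nlinarith [sq_nonneg (p - 1/2)]
  have hεp : ε₀ < p := lt_of_le_of_lt hε₀a (by nlinarith)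
  have hε1p : ε₀ < 1 - p := lt_of_le_of_lt hε₀a (by nlinarith)
  have hE1 : ∀ᶠ nn : ℕ in Filter.atTop, ε₀*(nn:ℝ)/2 + R + 1 ≤ p*(nn:ℝ)/2 :=
    (hlin ((p-ε₀)/2) (R+1) (by linarith)).mono (fun nn h => by nlinarith)
  have hE2 : ∀ᶠ nn : ℕ in Filter.atTop, ε₀*(nn:ℝ)/2 + R + 1 ≤ (1-p)*(nn:ℝ)/2 :=
    (hlin ((1-p-ε₀)/2) (R+1) (by linarith)).mono (fun nn h => by nlinarith)
  have hE3 : ∀ᶠ nn : ℕ in Filter.atTop, R + 3/2 ≤ ε₀*(nn:ℝ)/2 :=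
    (hlin (ε₀/2) (R+3/2) (by linarith)).mono (fun nn h => by nlinarith)
  have hE4 : ∀ᶠ nn : ℕ in Filter.atTop,
      3*(ε₀*(nn:ℝ)) + 3 ≤ p*(1-p)*((nn:ℝ)/2 - (ε₀*(nn:ℝ)/2 + R) + 1) := by
    have hc4 : 0 < p*(1-p)*(1-ε₀)/2 - 3*ε₀ := by nlinarith
    exact (hlin (p*(1-p)*(1-ε₀)/2 - 3*ε₀) (3 + p*(1-p)*(R-1)) hc4).mono
      (fun nn h => by nlinarith)
  have hE5 : ∀ᶠ nn : ℕ in Filter.atTop,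
      2*((K:ℝ)+1)*((nn:ℝ)+1)^(2*K+2) ≤ Real.exp (γ/2 * (nn:ℝ)) := by
    have harg : Filter.Tendsto (fun nn : ℕ => (γ/2) * ((nn:ℝ)+1))
        Filter.atTop Filter.atTop := by
      apply Filter.Tendsto.const_mul_atTop (by positivity)
      exact Filter.tendsto_atTop_add_const_right _ 1 tendsto_natCast_atTop_atTop
    have hcomp := (Real.tendsto_pow_mul_exp_neg_atTop_nhds_zero (2*K+2)).comp harg
    set ε' : ℝ := (γ/2)^(2*K+2) / (2*((K:ℝ)+1)*Real.exp (γ/2)) with hε'def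
    have hε'pos : 0 < ε' := by positivity
    have hev := hcomp.eventually (gt_mem_nhds hε'pos)
    refine hev.mono (fun nn h => ?_)
    simp only [Function.comp_apply] at h
    have hgt : (0:ℝ) < Real.exp (γ/2 * ((nn:ℝ)+1)) := Real.exp_pos _
    have hexp1 : Real.exp (-(γ/2 * ((nn:ℝ)+1))) * Real.exp (γ/2 * ((nn:ℝ)+1)) = 1 := by
      rw [← Real.exp_add]
      simp
    have h2 : ((γ/2) * ((nn:ℝ)+1))^(2*K+2) < ε' * Real.exp (γ/2 * ((nn:ℝ)+1)) := by
      have h3 := mul_lt_mul_of_pos_right h hgt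
      rwa [mul_assoc, hexp1, mul_one] at h3
    rw [mul_pow] at h2
    have hsplit : Real.exp (γ/2 * ((nn:ℝ)+1))
        = Real.exp (γ/2) * Real.exp (γ/2 * (nn:ℝ)) := by
      rw [← Real.exp_add]
      congr 1
      ring
    rw [hsplit, hε'def] at h2
    have h3 : (γ/2)^(2*K+2)/(2*((K:ℝ)+1)*Real.exp (γ/2))
        * (Real.exp (γ/2) * Real.exp (γ/2 * (nn:ℝ)))
        = (γ/2)^(2*K+2) * (Real.exp (γ/2 * (nn:ℝ)) / (2*((K:ℝ)+1))) := by
      field_simp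
    rw [h3] at h2
    have hgM : (0:ℝ) < (γ/2)^(2*K+2) := by positivity
    have h4 : ((nn:ℝ)+1)^(2*K+2) < Real.exp (γ/2 * (nn:ℝ)) / (2*((K:ℝ)+1)) :=
      lt_of_mul_lt_mul_left h2 hgM.le
    have hKpos : (0:ℝ) < 2*((K:ℝ)+1) := by positivity
    rw [lt_div_iff₀ hKpos] at h4
    linarith
  have hEall := hE1.and (hE2.and (hE3.and (hE4.and hE5)))
  rw [Filter.eventually_atTop] at hEall
  obtain ⟨n₀, hn₀⟩ := hEall
  set β : ℝ := min p (1-p) with hβdef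
  have hβ0 : 0 < β := lt_min hp0 h1p
  have hβ1 : β ≤ 1 := le_trans (min_le_left _ _) hp1.le
  have hβinv : 1 ≤ 1/β := by rw [le_div_iff₀ hβ0]; linarith
  refine ⟨max ((1/β)^n₀) 1, ?_⟩
  intro n x0
  have hαn : (1/A2)^n = Real.exp (γ * (n:ℝ)) := by
    calc (1/A2)^n = Real.exp γ ^ n := by rw [hγdef, Real.exp_log hαpos]
      _ = Real.exp ((n:ℝ) * γ) := (Real.exp_nat_mul γ n).symm
      _ = Real.exp (γ * (n:ℝ)) := by rw [mul_comm]
  have hαnpos : (0:ℝ) < (1/A2)^n := by positivity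
  by_cases hge : n₀ ≤ n
  · obtain ⟨h1, h2, h3, h4, h5⟩ := hn₀ n hge
    have hrb := refined_bound ⟨hp0, hp1⟩ hp2 hε0 hRdef hθK h1 h2 h3 h4 x0
    set S' : ℕ := ⌈ε₀*(n:ℝ)⌉₊ with hS'def
    have h2S : (2:ℝ)^S' ≤ 2*Real.exp (γ/2 * (n:ℝ)) := by
      have hceil : ((S':ℕ):ℝ) ≤ ε₀*(n:ℝ) + 1 :=
        (Nat.ceil_lt_add_one (by positivity)).le
      have hε₀log : ε₀ * Real.log 2 ≤ γ/2 := by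
        have h6 := hε₀b
        rw [le_div_iff₀ (by positivity)] at h6
        nlinarith
      calc (2:ℝ)^S' = (2:ℝ)^((S':ℕ):ℝ) := (Real.rpow_natCast 2 S').symm
        _ ≤ (2:ℝ)^(ε₀*(n:ℝ)+1) := Real.rpow_le_rpow_of_exponent_le one_le_two hceil
        _ = Real.exp (Real.log 2 * (ε₀*(n:ℝ)+1)) := by
            rw [Real.rpow_def_of_pos (by norm_num : (0:ℝ) < 2)]
        _ ≤ Real.exp (γ/2 * (n:ℝ) + Real.log 2) := by
            apply Real.exp_le_exp.2
            have hnn : (0:ℝ) ≤ (n:ℝ) := Nat.cast_nonneg n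
            nlinarith
        _ = 2*Real.exp (γ/2 * (n:ℝ)) := by
            rw [Real.exp_add, Real.exp_log (by norm_num : (0:ℝ) < 2)]
            ring
    have hδval : (1/(((n:ℝ)+1)^2))^(K+1) * (1/2:ℝ)^S'
        = 1/(((n:ℝ)+1)^(2*K+2) * 2^S') := by
      rw [div_pow, div_pow, one_pow, one_pow, ← pow_mul]
      rw [show 2*(K+1) = 2*K+2 from by ring]
      rw [div_mul_div_comm, one_mul]
    have hrb2 : ((K:ℝ)+1) / ((1/(((n:ℝ)+1)^2))^(K+1) * (1/2:ℝ)^S')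
        = ((K:ℝ)+1) * (((n:ℝ)+1)^(2*K+2) * 2^S') := by
      rw [hδval]
      have hXpos : (0:ℝ) < ((n:ℝ)+1)^(2*K+2) * 2^S' := by positivity
      field_simp
    have hfinal : ((K:ℝ)+1) * (((n:ℝ)+1)^(2*K+2) * 2^S') ≤ Real.exp (γ * (n:ℝ)) := by
      have hm1 : (0:ℝ) ≤ ((n:ℝ)+1)^(2*K+2) := by positivity
      have hm2 : (0:ℝ) ≤ ((K:ℝ)+1) * ((n:ℝ)+1)^(2*K+2) := by positivity
      calc ((K:ℝ)+1) * (((n:ℝ)+1)^(2*K+2) * 2^S')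
          ≤ ((K:ℝ)+1) * (((n:ℝ)+1)^(2*K+2) * (2*Real.exp (γ/2 * (n:ℝ)))) := by
            refine mul_le_mul_of_nonneg_left ?_ (by positivity)
            exact mul_le_mul_of_nonneg_left h2S hm1
        _ = (2*((K:ℝ)+1)*((n:ℝ)+1)^(2*K+2)) * Real.exp (γ/2 * (n:ℝ)) := by ring
        _ ≤ Real.exp (γ/2 * (n:ℝ)) * Real.exp (γ/2 * (n:ℝ)) := by
            refine mul_le_mul_of_nonneg_right h5 (Real.exp_pos _).le
        _ = Real.exp (γ * (n:ℝ)) := by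
            rw [← Real.exp_add]
            congr 1
            ring
    calc pureHitTime p (stones p n) x0
        ≤ ((K:ℝ)+1) / ((1/(((n:ℝ)+1)^2))^(K+1) * (1/2:ℝ)^S') := hrb
      _ = ((K:ℝ)+1) * (((n:ℝ)+1)^(2*K+2) * 2^S') := hrb2
      _ ≤ Real.exp (γ * (n:ℝ)) := hfinal
      _ = (1/A2)^n := hαn.symm
      _ ≤ max ((1/β)^n₀) 1 * (1/A2)^n := by
          refine le_mul_of_one_le_left hαnpos.le (le_max_right _ _)
  · push_neg at hge
    have hcr := crude_bound ⟨hp0, hp1⟩ hp2 n x0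
    calc pureHitTime p (stones p n) x0 ≤ (1/β)^n := hcr
      _ ≤ (1/β)^n₀ := pow_le_pow_right₀ hβinv hge.le
      _ ≤ max ((1/β)^n₀) 1 := le_max_left _ _
      _ ≤ max ((1/β)^n₀) 1 * (1/A2)^n := by
          refine le_mul_of_one_le_right ?_ (one_le_pow₀ hα1.le)
          exact le_trans (by norm_num) (le_max_right _ _)

end DSS
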